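/- arXiv:2407.03754 — 3 statements merged into one kernel-verified Lean document; each statement's English description precedes it below -/
import Mathlib

section
/- Let p be a prime and let K be a field of characteristic different from p containing a primitive p-th root of unity. Let A be a subgroup of K^× containing (K^×)^p such that A/(K^×)^p is finite. Then K(\sqrt[p]{A})/K (the extension obtained by adjoining a p-th root of every element of A) is a finite Galois extension, its Galois group is isomorphic to Hom(A/(K^×)^p, μ_p), and in particular Gal(K(\sqrt[p]{A})/K) is abelian of exponent dividing p with order equal to the order of A/(K^×)^p. -/
open Polynomial IntermediateField

lemma kummer_aux_rou {K : Type*} [Field K] {p : ℕ} (hp : 0 < p) {ζ : K}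
    (hζ : IsPrimitiveRoot ζ p) {L : Type*} [Field L] [Algebra K L]
    {u : L} (hu : u ^ p = 1) : ∃ v : K, v ^ p = 1 ∧ algebraMap K L v = u := by
  have h1 : (X ^ p - C (1 : K)) = ∏ i ∈ Finset.range p, (X - C (ζ ^ i * 1)) :=
    X_pow_sub_C_eq_prod hζ hp (one_pow p)
  have h2 : (Polynomial.aeval u) (X ^ p - C (1 : K)) = 0 := by
    simp [hu]
  rw [h1, map_prod] at h2
  obtain ⟨i, -, hi⟩ := Finset.prod_eq_zero_iff.mp h2
  refine ⟨ζ ^ i, by rw [← pow_mul, mul_comm, pow_mul, hζ.pow_eq_one, one_pow], ?_⟩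
  simp only [map_sub, map_mul, aeval_X, aeval_C, map_one, mul_one, sub_eq_zero] at hi
  exact hi.symm

lemma kummer_card_monoidHom {K : Type*} [Field K] {p : ℕ} (hp : p.Prime) {ζ : K}
    (hζ : IsPrimitiveRoot ζ p) (G : Type*) [CommGroup G] [Finite G]
    (hG : ∀ g : G, g ^ p = 1) :
    Nat.card (G →* rootsOfUnity p K) = Nat.card G := by
  have : NeZero p := ⟨hp.ne_zero⟩
  have hRU : HasEnoughRootsOfUnity K p := ⟨⟨ζ, hζ⟩, inferInstance⟩
  have hdvd : Monoid.exponent G ∣ p := Monoid.exponent_dvd_of_forall_pow_eq_one hG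
  have : HasEnoughRootsOfUnity K (Monoid.exponent G) := HasEnoughRootsOfUnity.of_dvd K hdvd
  obtain ⟨e⟩ := CommGroup.monoidHom_mulEquiv_of_hasEnoughRootsOfUnity G K
  have e2 : (G →* rootsOfUnity p K) ≃ (G →* Kˣ) :=
    { toFun := fun φ => ((rootsOfUnity p K).subtype).comp φ
      invFun := fun φ => φ.codRestrict _ fun g =>
        (mem_rootsOfUnity _ _).mpr (by rw [← map_pow, hG, map_one])
      left_inv := fun φ => by ext g; rfl
      right_inv := fun φ => by ext g; rfl }
  rw [Nat.card_congr e2, Nat.card_congr e.toEquiv]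

set_option maxHeartbeats 2000000 in
/-- Let `p` be a prime and let `K` be a field of characteristic different from
`p` containing a primitive `p`-th root of unity.  Let `A` be a subgroup of `K^×` containing
`(K^×)^p` such that `A/(K^×)^p` is finite.  Then `K(√[p]{A})/K` (the extension obtained by
adjoining a `p`-th root of every element of `A`, here realized inside an algebraic closure of
`K`) is a finite Galois extension, its Galois group is isomorphic to
`Hom(A/(K^×)^p, μ_p)`, and in particular it is abelian of exponent dividing `p`
with order equal to the order of `A/(K^×)^p`. -/
theorem kummer_extension_galois_group
    (K : Type*) [Field K] (p : ℕ) (hp : p.Prime) (hchar : ringChar K ≠ p)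
    (ζ : K) (hζ : IsPrimitiveRoot ζ p)
    (A : Subgroup Kˣ) (hA : (powMonoidHom p : Kˣ →* Kˣ).range ≤ A)
    (hfin : Finite (A ⧸ ((powMonoidHom p : Kˣ →* Kˣ).range.subgroupOf A)))
    (F : IntermediateField K (AlgebraicClosure K))
    (hF : F = IntermediateField.adjoin K
      {x : AlgebraicClosure K | ∃ a : Kˣ, a ∈ A ∧ x ^ p = algebraMap K (AlgebraicClosure K) a}) :
    FiniteDimensional K F ∧ IsGalois K F ∧
      Nonempty ((F ≃ₐ[K] F) ≃*
        ((A ⧸ ((powMonoidHom p : Kˣ →* Kˣ).range.subgroupOf A)) →* (rootsOfUnity p K))) ∧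
      (∀ g h : F ≃ₐ[K] F, g * h = h * g) ∧ (∀ g : F ≃ₐ[K] F, g ^ p = 1) ∧
      Nat.card (F ≃ₐ[K] F)
        = Nat.card (A ⧸ ((powMonoidHom p : Kˣ →* Kˣ).range.subgroupOf A)) := by
  classical
  subst hF
  haveI : NeZero p := ⟨hp.ne_zero⟩
  set L := AlgebraicClosure K with hLdef
  set S : Set L := {x : L | ∃ a : Kˣ, a ∈ A ∧ x ^ p = algebraMap K L a} with hSdef
  set H : Subgroup A := ((powMonoidHom p : Kˣ →* Kˣ).range.subgroupOf A) with hHdef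
  haveI : Finite (A ⧸ H) := hfin
  haveI : Fintype (A ⧸ H) := Fintype.ofFinite _
  have hp0 : 0 < p := hp.pos
  have hpK : (p : K) ≠ 0 := by
    intro h
    have hdvd : ringChar K ∣ p := (CharP.cast_eq_zero_iff K (ringChar K) p).mp h
    rcases hp.eq_one_or_self_of_dvd _ hdvd with h1 | h1
    · exact CharP.char_ne_one K (ringChar K) h1
    · exact hchar h1
  -- the representatives and the splitting polynomial
  set rep : (A ⧸ H) → A := Quotient.out with hrepdef
  have hrep_eq : ∀ q : A ⧸ H, QuotientGroup.mk (rep q) = q := fun q => Quotient.out_eq q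
  set f : K[X] := ∏ q : A ⧸ H, (X ^ p - C (((rep q : Kˣ) : K))) with hfdef
  have hmono : f.Monic := monic_prod_of_monic _ _ fun q _ => monic_X_pow_sub_C _ hp.ne_zero
  have hsep : f.Separable := by
    apply Polynomial.separable_prod
    · intro q q' hqq'
      have hne : ((rep q' : Kˣ) : K) - ((rep q : Kˣ) : K) ≠ 0 := by
        rw [sub_ne_zero]
        intro h
        exact hqq' (by
          have : rep q' = rep q := Subtype.ext (Units.ext h)
          rw [← hrep_eq q, ← hrep_eq q', this])
      refine ⟨C (((rep q' : Kˣ) : K) - ((rep q : Kˣ) : K))⁻¹,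
        -C (((rep q' : Kˣ) : K) - ((rep q : Kˣ) : K))⁻¹, ?_⟩
      show C (((rep q' : Kˣ) : K) - ((rep q : Kˣ) : K))⁻¹ * (X ^ p - C ((rep q : Kˣ) : K)) +
        -C (((rep q' : Kˣ) : K) - ((rep q : Kˣ) : K))⁻¹ * (X ^ p - C ((rep q' : Kˣ) : K)) = 1
      rw [neg_mul, ← sub_eq_add_neg, ← mul_sub, sub_sub_sub_cancel_left, ← C_sub, ← C_mul,
        inv_mul_cancel₀ hne, C_1]
    · exact fun q => separable_X_pow_sub_C ((rep q : Kˣ) : K) hpK (Units.ne_zero _)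
  have hsplitsL : (f.map (algebraMap K L)).Splits := IsAlgClosed.splits _
  set F' : IntermediateField K L := adjoin K (f.rootSet L) with hF'def
  haveI hsf : f.IsSplittingField K F' := adjoin_rootSet_isSplittingField hsplitsL
  -- characterize the roots of f
  have hroot_iff : ∀ x : L, x ∈ f.rootSet L ↔
      ∃ q : A ⧸ H, x ^ p = algebraMap K L ((rep q : Kˣ) : K) := by
    intro x
    rw [Polynomial.mem_rootSet]
    have hev : (Polynomial.aeval x) f
        = ∏ q : A ⧸ H, (x ^ p - algebraMap K L ((rep q : Kˣ) : K)) := by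
      rw [hfdef, map_prod]
      simp only [map_sub, map_pow, aeval_X, aeval_C]
    constructor
    · rintro ⟨-, h⟩
      rw [hev] at h
      obtain ⟨q, -, hq⟩ := Finset.prod_eq_zero_iff.mp h
      exact ⟨q, by rwa [sub_eq_zero] at hq⟩
    · rintro ⟨q, hq⟩
      refine ⟨hmono.ne_zero, ?_⟩
      rw [hev]
      exact Finset.prod_eq_zero (Finset.mem_univ q) (by rw [hq, sub_self])
  -- the adjoin of S equals F'
  have hgen : adjoin K S = F' := by
    apply le_antisymm
    · rw [adjoin_le_iff]
      rintro x ⟨a, haA, hxa⟩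
      set q : A ⧸ H := QuotientGroup.mk (⟨a, haA⟩ : A) with hq
      have hmem : (rep q)⁻¹ * (⟨a, haA⟩ : A) ∈ H := by
        rw [← QuotientGroup.eq]
        exact hrep_eq q
      rw [hHdef, Subgroup.mem_subgroupOf] at hmem
      obtain ⟨b, hb⟩ := hmem
      -- hb : b ^ p = (rep q)⁻¹ * a  in Kˣ
      rw [powMonoidHom_apply] at hb
      have hb' : (rep q : Kˣ) * b ^ p = a := by
        rw [hb]; push_cast; simp [mul_inv_cancel_left]
      have hbne : algebraMap K L (b : K) ≠ 0 := by
        simp [Units.ne_zero]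
      have haK : (a : K) = ((rep q : Kˣ) : K) * (b : K) ^ p := by
        rw [← hb']; push_cast; ring
      have hy : x * (algebraMap K L (b : K))⁻¹ ∈ f.rootSet L := by
        rw [hroot_iff]
        refine ⟨q, ?_⟩
        rw [mul_pow, hxa, inv_pow, ← map_pow, haK, map_mul, map_pow,
          mul_inv_cancel_right₀ (pow_ne_zero _ hbne)]
      have : x = (x * (algebraMap K L (b : K))⁻¹) * algebraMap K L (b : K) := by
        rw [inv_mul_cancel_right₀ hbne]
      rw [this]
      exact F'.mul_mem (subset_adjoin K _ hy) (F'.algebraMap_mem _)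
    · rw [hF'def, adjoin_le_iff]
      intro x hx
      rw [hroot_iff] at hx
      obtain ⟨q, hq⟩ := hx
      exact subset_adjoin K S ⟨(rep q : Kˣ), (rep q).2, hq⟩
  rw [hgen]
  haveI hFD : FiniteDimensional K F' := Polynomial.IsSplittingField.finiteDimensional F' f
  haveI hGal : IsGalois K F' := IsGalois.of_separable_splitting_field hsep
  haveI : Finite (F' ≃ₐ[K] F') := inferInstance
  -- the algebra map from K
  set emb : K →+* F' := algebraMap K F' with hembdef
  have hembinj : Function.Injective emb := emb.injective
  have hemb_rou : ∀ {u : F'}, u ^ p = 1 → ∃ v : K, v ^ p = 1 ∧ emb v = u :=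
    fun hu => kummer_aux_rou hp0 hζ hu
  -- a choice of p-th root in F' for each element of A
  have hex_root : ∀ a : A, ∃ x : F', x ^ p = emb ((a : Kˣ) : K) := by
    intro a
    obtain ⟨z, hz⟩ := IsAlgClosed.exists_pow_nat_eq (algebraMap K L ((a : Kˣ) : K)) hp0
    have hzS : z ∈ S := ⟨(a : Kˣ), a.2, hz⟩
    have hzF : z ∈ F' := hgen ▸ subset_adjoin K S hzS
    refine ⟨⟨z, hzF⟩, ?_⟩
    apply Subtype.ext
    push_cast
    rw [hz]
    rfl
  set r : A → F' := fun a => (hex_root a).choose with hrdef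
  have hr : ∀ a : A, (r a) ^ p = emb ((a : Kˣ) : K) := fun a => (hex_root a).choose_spec
  have hembne : ∀ a : A, emb ((a : Kˣ) : K) ≠ 0 := by
    intro a h
    exact Units.ne_zero (a : Kˣ) (hembinj (h.trans emb.map_zero.symm))
  have hr0 : ∀ a : A, r a ≠ 0 := by
    intro a h
    exact hembne a (by rw [← hr a, h, zero_pow hp.ne_zero])
  -- uniqueness of the scalar
  have huniq : ∀ {v w : K} {x : F'}, x ≠ 0 → emb v * x = emb w * x → v = w := by
    intro v w x hx h
    exact hembinj (mul_right_cancel₀ hx h)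
  -- every automorphism multiplies each p-th root by a p-th root of unity from K
  have hex_v : ∀ (g : F' ≃ₐ[K] F') (a : A), ∃ v : K, v ^ p = 1 ∧ g (r a) = emb v * r a := by
    intro g a
    have h2 : (g (r a)) ^ p = emb ((a : Kˣ) : K) := by
      rw [← map_pow, hr a]; exact g.commutes _
    have h1 : (g (r a) * (r a)⁻¹) ^ p = 1 := by
      rw [mul_pow, inv_pow, h2, hr, mul_inv_cancel₀ (hembne a)]
    obtain ⟨w, hw1, hw2⟩ := hemb_rou h1
    exact ⟨w, hw1, by rw [hw2, inv_mul_cancel_right₀ (hr0 a)]⟩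
  set v : (F' ≃ₐ[K] F') → A → K := fun g a => (hex_v g a).choose with hvdef
  have hv1 : ∀ g a, (v g a) ^ p = 1 := fun g a => (hex_v g a).choose_spec.1
  have hv2 : ∀ g a, g (r a) = emb (v g a) * r a := fun g a => (hex_v g a).choose_spec.2
  -- the scalar is independent of the chosen root
  have hval : ∀ (g : F' ≃ₐ[K] F') (a : A) (x : F'), x ≠ 0 → x ^ p = emb ((a : Kˣ) : K) →
      g x = emb (v g a) * x := by
    intro g a x hx hxp
    have h1 : (x * (r a)⁻¹) ^ p = 1 := by
      rw [mul_pow, inv_pow, hxp, hr, mul_inv_cancel₀ (hembne a)]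
    obtain ⟨w, hw1, hw2⟩ := hemb_rou h1
    have hxeq : x = emb w * r a := by rw [hw2, inv_mul_cancel_right₀ (hr0 a)]
    rw [hxeq, map_mul, show g (emb w) = emb w from g.commutes w, hv2 g a]
    ring
  -- multiplicativity in a
  have hmul_a : ∀ (g : F' ≃ₐ[K] F') (a b : A), v g (a * b) = v g a * v g b := by
    intro g a b
    have hxne : r a * r b ≠ 0 := mul_ne_zero (hr0 a) (hr0 b)
    have hxp : (r a * r b) ^ p = emb (((a * b : A) : Kˣ) : K) := by
      rw [mul_pow, hr, hr, ← map_mul]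
      norm_cast
    have h1 := hval g (a * b) (r a * r b) hxne hxp
    rw [map_mul, hv2 g a, hv2 g b] at h1
    apply huniq hxne
    rw [← h1, map_mul]
    ring
  -- multiplicativity in g
  have hmul_g : ∀ (g h : F' ≃ₐ[K] F') (a : A), v (g * h) a = v g a * v h a := by
    intro g h a
    have hy : h (r a) ≠ 0 := by
      simp only [ne_eq, map_eq_zero_iff h h.injective]
      exact hr0 a
    have hyp : (h (r a)) ^ p = emb ((a : Kˣ) : K) := by
      rw [← map_pow, hr a]; exact h.commutes _
    have h1 : (g * h) (r a) = emb (v g a) * h (r a) := hval g a (h (r a)) hy hyp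
    rw [hv2 h a] at h1
    apply huniq (hr0 a)
    rw [← hv2 (g * h) a, h1, map_mul]
    ring
  -- elements of (K^×)^p give trivial scalar
  have hker : ∀ (a : A), (a : Kˣ) ∈ (powMonoidHom p : Kˣ →* Kˣ).range →
      ∀ g : F' ≃ₐ[K] F', v g a = 1 := by
    rintro a ⟨b, hb⟩ g
    rw [powMonoidHom_apply] at hb
    have hxne : emb ((b : Kˣ) : K) ≠ 0 := by
      simp [Units.ne_zero, map_eq_zero_iff emb hembinj]
    have hxp : (emb ((b : Kˣ) : K)) ^ p = emb ((a : Kˣ) : K) := by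
      rw [← map_pow]
      congr 1
      rw [← hb]
      push_cast
      ring
    have h1 := hval g a _ hxne hxp
    rw [show g (emb ((b : Kˣ) : K)) = emb ((b : Kˣ) : K) from g.commutes _] at h1
    apply huniq hxne
    rw [← h1, map_one, one_mul]
  -- two automorphisms agreeing on all p-th roots of elements of A are equal
  have hext : ∀ g h : F' ≃ₐ[K] F',
      (∀ (a : A) (y : F'), y ≠ 0 → y ^ p = emb ((a : Kˣ) : K) → g y = h y) → g = h := by
    intro g h hgh
    have htop : Algebra.adjoin K (f.rootSet F') = ⊤ := hsf.adjoin_rootSet'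
    have hsub : f.rootSet F' ⊆
        (AlgHom.equalizer (g : F' →ₐ[K] F') (h : F' →ₐ[K] F') : Set F') := by
      intro y hy
      rw [Polynomial.mem_rootSet] at hy
      obtain ⟨-, hy2⟩ := hy
      have hev : (Polynomial.aeval y) f
          = ∏ q : A ⧸ H, (y ^ p - emb ((rep q : Kˣ) : K)) := by
        rw [hfdef, map_prod]
        simp only [map_sub, map_pow, aeval_X, aeval_C]
        rfl
      rw [hev] at hy2
      obtain ⟨q, -, hq⟩ := Finset.prod_eq_zero_iff.mp hy2
      rw [sub_eq_zero] at hq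
      have hy0 : y ≠ 0 := by
        intro h0
        rw [h0, zero_pow hp.ne_zero] at hq
        exact hembne (rep q) hq.symm
      exact hgh (rep q) y hy0 hq
    have heq : AlgHom.equalizer (g : F' →ₐ[K] F') (h : F' →ₐ[K] F') = ⊤ :=
      top_unique (htop ▸ Algebra.adjoin_le hsub)
    apply AlgEquiv.ext
    intro x
    have hx : x ∈ AlgHom.equalizer (g : F' →ₐ[K] F') (h : F' →ₐ[K] F') := by
      rw [heq]; exact Algebra.mem_top
    exact hx
  -- the Galois group is abelian
  have habelian : ∀ g h : F' ≃ₐ[K] F', g * h = h * g := by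
    intro g h
    apply hext
    intro a y hy0 hyp
    have hhy0 : h y ≠ 0 := by
      simp only [ne_eq, map_eq_zero_iff h h.injective]; exact hy0
    have hgy0 : g y ≠ 0 := by
      simp only [ne_eq, map_eq_zero_iff g g.injective]; exact hy0
    have e1 : (g * h) y = emb (v g a) * (emb (v h a) * y) := by
      rw [AlgEquiv.mul_apply, hval h a y hy0 hyp, map_mul,
        show g (emb (v h a)) = emb (v h a) from g.commutes _, hval g a y hy0 hyp]
      ring
    have e2 : (h * g) y = emb (v h a) * (emb (v g a) * y) := by
      rw [AlgEquiv.mul_apply, hval g a y hy0 hyp, map_mul,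
        show h (emb (v g a)) = emb (v g a) from h.commutes _, hval h a y hy0 hyp]
      ring
    rw [e1, e2]
    ring
  -- the Galois group has exponent dividing p
  have hpowval : ∀ (g : F' ≃ₐ[K] F') (a : A) (y : F'), y ≠ 0 → y ^ p = emb ((a : Kˣ) : K) →
      ∀ n : ℕ, (g ^ n) y = emb ((v g a) ^ n) * y := by
    intro g a y hy0 hyp n
    induction n with
    | zero => simp
    | succ n ih =>
      rw [pow_succ, AlgEquiv.mul_apply, hval g a y hy0 hyp, map_mul,
        show (g ^ n) (emb (v g a)) = emb (v g a) from (g ^ n).commutes _, ih, pow_succ, map_mul]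
      ring
  have hexp : ∀ g : F' ≃ₐ[K] F', g ^ p = 1 := by
    intro g
    apply hext
    intro a y hy0 hyp
    rw [hpowval g a y hy0 hyp p, hv1, map_one, one_mul, AlgEquiv.one_apply]
  -- package the scalars as roots of unity
  set ρ : (F' ≃ₐ[K] F') → A → rootsOfUnity p K :=
    fun g a => rootsOfUnity.mkOfPowEq (v g a) (hv1 g a) with hρdef
  have hρcoe : ∀ g a, ((ρ g a : Kˣ) : K) = v g a := fun g a => rfl
  have hρ_eqK : ∀ (x y : rootsOfUnity p K), ((x : Kˣ) : K) = ((y : Kˣ) : K) → x = y :=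
    fun x y hxy => Subtype.ext (Units.ext hxy)
  have hρ_mul_a : ∀ g a b, ρ g (a * b) = ρ g a * ρ g b := by
    intro g a b
    apply hρ_eqK
    rw [Subgroup.coe_mul, Units.val_mul, hρcoe, hρcoe, hρcoe]
    exact hmul_a g a b
  have hρ_mul_g : ∀ g h a, ρ (g * h) a = ρ g a * ρ h a := by
    intro g h a
    apply hρ_eqK
    rw [Subgroup.coe_mul, Units.val_mul, hρcoe, hρcoe, hρcoe]
    exact hmul_g g h a
  have hρ_H : ∀ a : A, a ∈ H → ∀ g, ρ g a = 1 := by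
    intro a ha g
    rw [hHdef, Subgroup.mem_subgroupOf] at ha
    apply hρ_eqK
    rw [hρcoe, OneMemClass.coe_one, Units.val_one]
    exact hker a ha g
  -- the homomorphism from the Galois group to the character group
  have hliftker : ∀ g : F' ≃ₐ[K] F', ∀ a ∈ H,
      MonoidHom.mk' (fun a => ρ g a) (hρ_mul_a g) a = 1 := fun g a ha => hρ_H a ha g
  set Χ₁ : (F' ≃ₐ[K] F') → ((A ⧸ H) →* rootsOfUnity p K) :=
    fun g => QuotientGroup.lift H (MonoidHom.mk' (fun a => ρ g a) (hρ_mul_a g)) (hliftker g)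
    with hΧ₁def
  have hΧ₁app : ∀ (g : F' ≃ₐ[K] F') (a : A), Χ₁ g (QuotientGroup.mk a) = ρ g a :=
    fun g a => rfl
  have hΧ₁mul : ∀ g h, Χ₁ (g * h) = Χ₁ g * Χ₁ h := by
    intro g h
    refine MonoidHom.ext fun b => ?_
    refine QuotientGroup.induction_on b ?_
    intro a
    rw [MonoidHom.mul_apply, hΧ₁app, hΧ₁app, hΧ₁app]
    exact hρ_mul_g g h a
  set Χ : (F' ≃ₐ[K] F') →* ((A ⧸ H) →* rootsOfUnity p K) :=
    MonoidHom.mk' Χ₁ hΧ₁mul with hΧdef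
  have hΧapp : ∀ (g : F' ≃ₐ[K] F') (a : A), Χ g (QuotientGroup.mk a) = ρ g a :=
    fun g a => rfl
  have hΧinj : Function.Injective Χ := by
    intro g g' hgg'
    apply hext
    intro a y hy0 hyp
    have h1 : ρ g a = ρ g' a := by
      rw [← hΧapp g a, ← hΧapp g' a, hgg']
    have hvv : v g a = v g' a := by
      rw [← hρcoe g a, ← hρcoe g' a, h1]
    rw [hval g a y hy0 hyp, hval g' a y hy0 hyp, hvv]
  -- the homomorphism from the quotient group to characters of the Galois group
  set P : A → ((F' ≃ₐ[K] F') →* rootsOfUnity p K) :=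
    fun a => MonoidHom.mk' (fun g => ρ g a) (fun g h => hρ_mul_g g h a) with hPdef
  have hPmul : ∀ a b, P (a * b) = P a * P b := by
    intro a b
    refine MonoidHom.ext fun g => ?_
    rw [MonoidHom.mul_apply]
    exact hρ_mul_a g a b
  set Φ₀ : A →* ((F' ≃ₐ[K] F') →* rootsOfUnity p K) := MonoidHom.mk' P hPmul with hΦ₀def
  have hΦ₀ker : ∀ a ∈ H, Φ₀ a = 1 := by
    intro a ha
    refine MonoidHom.ext fun g => ?_
    show ρ g a = 1
    exact hρ_H a ha g
  set Φ : (A ⧸ H) →* ((F' ≃ₐ[K] F') →* rootsOfUnity p K) :=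
    QuotientGroup.lift H Φ₀ hΦ₀ker with hΦdef
  have hΦinj : Function.Injective Φ := by
    rw [injective_iff_map_eq_one]
    intro b hb
    refine QuotientGroup.induction_on b ?_ hb
    intro a ha
    rw [QuotientGroup.eq_one_iff]
    -- from triviality of the character, a is a p-th power
    have hfix : ∀ g : F' ≃ₐ[K] F', g (r a) = r a := by
      intro g
      have h1 : ρ g a = 1 := by
        have h2 := DFunLike.congr_fun ha g
        exact h2
      have h2 : v g a = 1 := by
        rw [← hρcoe g a, h1, OneMemClass.coe_one, Units.val_one]
      rw [hv2 g a, h2, map_one, one_mul]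
    -- hence r a is fixed, so it lies in K
    have hbot : r a ∈ (⊥ : IntermediateField K F') := by
      rw [← IsGalois.fixedField_fixingSubgroup (⊥ : IntermediateField K F')]
      rintro ⟨g, -⟩
      exact hfix g
    rw [IntermediateField.mem_bot] at hbot
    obtain ⟨k, hk⟩ := hbot
    have hk0 : k ≠ 0 := by
      rintro rfl
      exact hr0 a (by rw [← hk]; exact emb.map_zero)
    have hkp : k ^ p = ((a : Kˣ) : K) := by
      apply hembinj
      rw [map_pow, hk, hr a]
    rw [hHdef, Subgroup.mem_subgroupOf]
    exact ⟨Units.mk0 k hk0, Units.ext (by rw [powMonoidHom_apply]; push_cast; exact hkp)⟩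
  -- finiteness of everything in sight
  haveI : HasEnoughRootsOfUnity K p := ⟨⟨ζ, hζ⟩, inferInstance⟩
  haveI : Finite (rootsOfUnity p K) := HasEnoughRootsOfUnity.finite_rootsOfUnity K p
  haveI : Finite ((A ⧸ H) →* rootsOfUnity p K) :=
    Finite.of_injective
      (fun φ : (A ⧸ H) →* rootsOfUnity p K => (φ : (A ⧸ H) → rootsOfUnity p K))
      DFunLike.coe_injective
  haveI : Finite ((F' ≃ₐ[K] F') →* rootsOfUnity p K) :=
    Finite.of_injective
      (fun φ : (F' ≃ₐ[K] F') →* rootsOfUnity p K => (φ : (F' ≃ₐ[K] F') → rootsOfUnity p K))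
      DFunLike.coe_injective
  -- the quotient group has exponent dividing p
  have hBexp : ∀ b : A ⧸ H, b ^ p = 1 := by
    intro b
    refine QuotientGroup.induction_on b ?_
    intro a
    have hpow : (QuotientGroup.mk (a ^ p) : A ⧸ H) = (QuotientGroup.mk a : A ⧸ H) ^ p :=
      map_pow (QuotientGroup.mk' H) a p
    rw [← hpow, QuotientGroup.eq_one_iff]
    rw [hHdef, Subgroup.mem_subgroupOf]
    refine ⟨(a : Kˣ), ?_⟩
    rw [powMonoidHom_apply]
    push_cast
    rfl
  -- counting
  have c1 : Nat.card ((A ⧸ H) →* rootsOfUnity p K) = Nat.card (A ⧸ H) :=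
    kummer_card_monoidHom hp hζ (A ⧸ H) hBexp
  have c2 : Nat.card ((F' ≃ₐ[K] F') →* rootsOfUnity p K) = Nat.card (F' ≃ₐ[K] F') := by
    letI : CommGroup (F' ≃ₐ[K] F') :=
      { (inferInstance : Group (F' ≃ₐ[K] F')) with mul_comm := habelian }
    exact kummer_card_monoidHom hp hζ (F' ≃ₐ[K] F') hexp
  have i1 : Nat.card (F' ≃ₐ[K] F') ≤ Nat.card ((A ⧸ H) →* rootsOfUnity p K) :=
    Nat.card_le_card_of_injective Χ hΧinj
  have i2 : Nat.card (A ⧸ H) ≤ Nat.card ((F' ≃ₐ[K] F') →* rootsOfUnity p K) :=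
    Nat.card_le_card_of_injective Φ hΦinj
  have hcard : Nat.card (F' ≃ₐ[K] F') = Nat.card (A ⧸ H) :=
    le_antisymm (le_of_le_of_eq i1 c1) (le_of_le_of_eq i2 c2)
  have hbij : Function.Bijective Χ :=
    (Nat.bijective_iff_injective_and_card Χ).mpr ⟨hΧinj, hcard.trans c1.symm⟩
  exact ⟨hFD, hGal, ⟨MulEquiv.ofBijective Χ hbij⟩, habelian, hexp, hcard⟩
end

section
/- Take p = 2 (so K' = K) and set S̄ = S_0 ∪ Pl^{re}_K. For each real place v ∈ Pl^{re}_K \ S_∞, let τ_v ∈ Gal(F_T^{S̄}/K) denote the complex conjugation induced by any embedding of F_T^{S̄} into ℂ extending the real embedding ι_v of K, and let H_{S_∞} be the subgroup of Gal(F_T^{S̄}/K) generated by all such τ_v. Then F_T^S = K(√{E_T^S}) is the fixed field of H_{S_∞} in F_T^{S̄} = K(√{E_T^{S̄}}); equivalently, Gal(K(√{E_T^S})/K) ≅ Gal(F_T^{S̄}/K)/H_{S_∞}. -/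
open IsDedekindDomain NumberField NumberField.InfinitePlace IntermediateField
open scoped Multiplicative

/-- The group `E_T^{S'}` of `S'`-units of `K` congruent to `1` modulo every place of `T`,
described as a subset of `Kˣ`. -/
def unitsETS (K : Type*) [Field K] [NumberField K]
    (T S₀ : Set (IsDedekindDomain.HeightOneSpectrum (𝓞 K)))
    (Sinf : Set (InfinitePlace K)) : Set Kˣ :=
  {x : Kˣ |
    (∀ v : IsDedekindDomain.HeightOneSpectrum (𝓞 K), v ∉ S₀ → v.valuation K (x : K) = 1) ∧
    (∀ (w : InfinitePlace K) (hw : IsReal w), w ∉ Sinf → 0 < embedding_of_isReal hw (x : K)) ∧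
    (∀ v ∈ T, v.valuation K ((x : K) - 1) < 1)}

section Aux
variable {K F : Type*} [Field K] [Field F] [Algebra K F]

/-- sign function on `ZMod 2` with values in a field. -/
def sgnF (F : Type*) [Field F] (a : ZMod 2) : F := if a = 0 then 1 else -1

lemma sgnF_add (a b : ZMod 2) : sgnF F (a + b) = sgnF F a * sgnF F b := by
  rcases (by decide : ∀ c : ZMod 2, c = 0 ∨ c = 1) a with rfl | rfl <;>
    rcases (by decide : ∀ c : ZMod 2, c = 0 ∨ c = 1) b with rfl | rfl <;>
    simp [sgnF, (by decide : (1+1:ZMod 2) = 0), (by decide : (1:ZMod 2) ≠ 0)]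

lemma auxIsIntegral {x : F} {c : K} (h : x ^ 2 = algebraMap K F c) : IsIntegral K x := by
  refine ⟨Polynomial.X ^ 2 - Polynomial.C c, Polynomial.monic_X_pow_sub_C c two_ne_zero, ?_⟩
  simp [h]

lemma auxPM {x y : F} (h : x ^ 2 = y ^ 2) : x = y ∨ x = -y := by
  have h0 : (x - y) * (x + y) = 0 := by linear_combination h
  rcases mul_eq_zero.mp h0 with h1 | h1
  · left; exact sub_eq_zero.mp h1
  · right; exact eq_neg_of_add_eq_zero_left h1

lemma auxFixesAdjoin {S : Set F} (halg : ∀ x ∈ S, IsIntegral K x)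
    (σ τ : F ≃ₐ[K] F) (h : ∀ x ∈ S, σ x = τ x) :
    ∀ y ∈ IntermediateField.adjoin K S, σ y = τ y := by
  intro y hy
  have h1 : (IntermediateField.adjoin K S).toSubalgebra = Algebra.adjoin K S :=
    IntermediateField.adjoin_toSubalgebra_of_isAlgebraic (fun x hx => (halg x hx).isAlgebraic)
  have h2 : Algebra.adjoin K S ≤ AlgHom.equalizer σ.toAlgHom τ.toAlgHom :=
    Algebra.adjoin_le (fun x hx => h x hx)
  have hy' : y ∈ Algebra.adjoin K S := by rw [← h1]; exact hy
  exact h2 hy'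

end Aux

section UnitsGroup
variable {K : Type*} [Field K] [NumberField K]
variable {T S₀ : Set (IsDedekindDomain.HeightOneSpectrum (𝓞 K))}
variable {Sinf : Set (InfinitePlace K)}

lemma unitsETS_one_mem (hT : ∀ u ∈ T, u ∉ S₀) : (1 : Kˣ) ∈ unitsETS K T S₀ Sinf := by
  refine ⟨fun v _ => by simp, fun w hw _ => by simp, fun v _ => by simp⟩

lemma unitsETS_mul_mem (hT : ∀ u ∈ T, u ∉ S₀) {a b : Kˣ}
    (ha : a ∈ unitsETS K T S₀ Sinf) (hb : b ∈ unitsETS K T S₀ Sinf) :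
    a * b ∈ unitsETS K T S₀ Sinf := by
  obtain ⟨ha1, ha2, ha3⟩ := ha
  obtain ⟨hb1, hb2, hb3⟩ := hb
  refine ⟨fun v hv => ?_, fun w hw hwn => ?_, fun v hv => ?_⟩
  · rw [Units.val_mul, map_mul, ha1 v hv, hb1 v hv, one_mul]
  · rw [Units.val_mul, map_mul]
    exact mul_pos (ha2 w hw hwn) (hb2 w hw hwn)
  · have hva : v.valuation K (a : K) = 1 := ha1 v (hT v hv)
    have heq : ((a * b : Kˣ) : K) - 1 = (a : K) * ((b : K) - 1) + ((a : K) - 1) := by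
      rw [Units.val_mul]; ring
    rw [heq]
    refine lt_of_le_of_lt ((v.valuation K).map_add _ _) (max_lt ?_ (ha3 v hv))
    rw [map_mul, hva, one_mul]
    exact hb3 v hv

end UnitsGroup

/-- Take `p = 2` (so `K' = K`) and set `S̄ = S_0 ∪ Pl^{re}_K`.  For each
real place `v ∈ Pl^{re}_K \ S_∞`, let `τ_v ∈ Gal(F_T^{S̄}/K)` denote the complex conjugation
induced by any embedding of `F_T^{S̄}` into `ℂ` extending the real embedding `ι_v` of `K`, and
let `H_{S_∞}` be the subgroup of `Gal(F_T^{S̄}/K)` generated by all such `τ_v`.  Then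
`F_T^S = K(√E_T^S)` is the fixed field of `H_{S_∞}` in `F_T^{S̄} = K(√E_T^{S̄})`;
equivalently, `Gal(K(√E_T^S)/K) ≅ Gal(F_T^{S̄}/K)/H_{S_∞}`. -/
theorem fixedField_of_conjugations_eq_governing_subfield
    (K F : Type*) [Field K] [NumberField K] [Field F] [NumberField F] [Algebra K F]
    (T S₀ : Set (IsDedekindDomain.HeightOneSpectrum (𝓞 K)))
    (Sinf : Set (InfinitePlace K))
    (hTfin : T.Finite) (hS₀fin : S₀.Finite) (hSreal : ∀ u ∈ Sinf, IsReal u)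
    (hTS : ∀ u ∈ T, u ∉ S₀)
    (hTmod : ∀ u ∈ T, Ideal.absNorm u.asIdeal ≡ 1 [MOD 2])
    (hFgen : IntermediateField.adjoin K
      {x : F | ∃ ε : Kˣ, ε ∈ unitsETS K T S₀ {w : InfinitePlace K | IsReal w} ∧
        x ^ 2 = algebraMap K F (ε : K)} = ⊤) :
    IntermediateField.fixedField
      (Subgroup.closure
        {τ : F ≃ₐ[K] F | ∃ (u : InfinitePlace K) (hu : IsReal u), u ∉ Sinf ∧
          ∃ φ : F →+* ℂ,
            (∀ x : K, φ (algebraMap K F x) = (embedding_of_isReal hu x : ℂ)) ∧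
            ∀ y : F, φ (τ y) = starRingEnd ℂ (φ y)}) =
      IntermediateField.adjoin K
        {x : F | ∃ ε : Kˣ, ε ∈ unitsETS K T S₀ Sinf ∧
          x ^ 2 = algebraMap K F (ε : K)} := by
  classical
  -- notation
  set Sbig : Set F := {x : F | ∃ ε : Kˣ, ε ∈ unitsETS K T S₀ {w : InfinitePlace K | IsReal w} ∧
      x ^ 2 = algebraMap K F (ε : K)} with hSbig
  set Tset : Set (F ≃ₐ[K] F) := {τ : F ≃ₐ[K] F | ∃ (u : InfinitePlace K) (hu : IsReal u), u ∉ Sinf ∧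
          ∃ φ : F →+* ℂ,
            (∀ x : K, φ (algebraMap K F x) = (embedding_of_isReal hu x : ℂ)) ∧
            ∀ y : F, φ (τ y) = starRingEnd ℂ (φ y)} with hTset
  set L : IntermediateField K F := IntermediateField.adjoin K
      {x : F | ∃ ε : Kˣ, ε ∈ unitsETS K T S₀ Sinf ∧ x ^ 2 = algebraMap K F (ε : K)} with hL
  -- basic instances
  letI : IsScalarTower ℚ K F := IsScalarTower.of_algebraMap_eq (fun x => by
    rw [show algebraMap ℚ F = (algebraMap K F).comp (algebraMap ℚ K) from Subsingleton.elim _ _]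
    rfl)
  haveI : FiniteDimensional K F := FiniteDimensional.right ℚ K F
  -- integrality of generators
  have hSbigInt : ∀ x ∈ Sbig, IsIntegral K x := by
    rintro x ⟨ε, _, hx2⟩; exact auxIsIntegral hx2
  -- nonvanishing of generators
  have hSbigNe : ∀ x ∈ Sbig, x ≠ 0 := by
    rintro x ⟨ε, _, hx2⟩ rfl
    exact ε.ne_zero ((algebraMap K F).injective (by simpa using hx2.symm))
  have hneg : ∀ x : F, x ≠ 0 → ¬(-x = x) := by
    intro x hx0 h
    apply hx0
    have h2 : (2 : F) * x = 0 := by linear_combination -h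
    rcases mul_eq_zero.mp h2 with h3 | h3
    · exact absurd h3 two_ne_zero
    · exact h3
  -- normality
  have hnormal : Normal K F := by
    rw [normal_iff]
    intro y
    refine ⟨IsIntegral.of_finite K y, ?_⟩
    refine IntermediateField.splits_of_mem_adjoin K F (L := F) (S := Sbig) (fun x hx => ?_)
      (by rw [hFgen]; exact IntermediateField.mem_top)
    obtain ⟨ε, _, hx2⟩ := hx
    refine ⟨auxIsIntegral hx2, ?_⟩
    have hsp : ((Polynomial.X ^ 2 - Polynomial.C ((ε : K))).map (algebraMap K F)).Splits := by
      have hmap : (Polynomial.X ^ 2 - Polynomial.C ((ε : K))).map (algebraMap K F)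
          = (Polynomial.X - Polynomial.C x) * (Polynomial.X - Polynomial.C (-x)) := by
        rw [Polynomial.map_sub, Polynomial.map_pow, Polynomial.map_X, Polynomial.map_C, ← hx2]
        simp only [map_pow, Polynomial.C_neg]
        ring
      rw [hmap]
      exact (Polynomial.Splits.X_sub_C _).mul (Polynomial.Splits.X_sub_C _)
    exact hsp.of_dvd
      (Polynomial.map_ne_zero (Polynomial.X_pow_sub_C_ne_zero two_pos _))
      (Polynomial.map_dvd _ (minpoly.dvd K x (by simp [hx2])))
  haveI := hnormal
  haveI : IsGalois K F := { to_isSeparable := inferInstance, to_normal := hnormal }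
  -- plus/minus action on generators
  have hpm : ∀ (σ : F ≃ₐ[K] F) (x : F) (c : K), x ^ 2 = algebraMap K F c →
      σ x = x ∨ σ x = -x := by
    intro σ x c h
    apply auxPM
    rw [← map_pow, h, AlgEquiv.commutes, ← h]
  -- commutativity and exponent 2
  have hglue : ∀ σ τ : (F ≃ₐ[K] F), (∀ x ∈ Sbig, σ x = τ x) → σ = τ := by
    intro σ τ hst
    apply AlgEquiv.ext
    intro y
    exact auxFixesAdjoin hSbigInt σ τ hst y (by rw [hFgen]; exact IntermediateField.mem_top)
  have hcomm : ∀ σ τ : (F ≃ₐ[K] F), σ * τ = τ * σ := by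
    intro σ τ
    apply hglue
    rintro x ⟨ε, hε, hx2⟩
    rcases hpm σ x _ hx2 with h1 | h1 <;> rcases hpm τ x _ hx2 with h2 | h2 <;>
      simp [AlgEquiv.mul_apply, h1, h2, map_neg]
  have hinv : ∀ σ : (F ≃ₐ[K] F), σ * σ = 1 := by
    intro σ
    apply hglue
    rintro x ⟨ε, hε, hx2⟩
    rcases hpm σ x _ hx2 with h1 | h1 <;>
      simp [AlgEquiv.mul_apply, h1, map_neg]
  letI : CommGroup (F ≃ₐ[K] F) :=
    { (inferInstance : Group (F ≃ₐ[K] F)) with mul_comm := hcomm }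
  letI : Module (ZMod 2) (Additive (F ≃ₐ[K] F)) := AddCommGroup.zmodModule (by
    intro x
    rw [two_smul]
    exact hinv (Additive.toMul x))
  letI := AlgEquiv.fintype K F
  haveI : FiniteDimensional (ZMod 2) (Additive (F ≃ₐ[K] F)) := Module.Finite.of_finite
  -- the subspace D of the dual
  let D : Submodule (ZMod 2) (Module.Dual (ZMod 2) (Additive (F ≃ₐ[K] F))) :=
    { carrier := {f | ∃ x : F, x ≠ 0 ∧ (∃ ε : Kˣ, ε ∈ unitsETS K T S₀ {w : InfinitePlace K | IsReal w} ∧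
          x ^ 2 = algebraMap K F (ε : K)) ∧
          ∀ τ : F ≃ₐ[K] F, τ x = sgnF F (f (Additive.ofMul τ)) * x}
      add_mem' := by
        rintro f g ⟨x, hx0, ⟨εx, hεx, hx2⟩, hxc⟩ ⟨y, hy0, ⟨εy, hεy, hy2⟩, hyc⟩
        refine ⟨x * y, mul_ne_zero hx0 hy0, ⟨εx * εy, unitsETS_mul_mem hTS hεx hεy, ?_⟩, ?_⟩
        · rw [mul_pow, hx2, hy2, Units.val_mul, map_mul]
        · intro τ
          rw [map_mul, hxc τ, hyc τ, LinearMap.add_apply, sgnF_add]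
          ring
      zero_mem' := by
        refine ⟨1, one_ne_zero, ⟨1, unitsETS_one_mem hTS, by simp⟩, ?_⟩
        intro τ
        simp [sgnF]
      smul_mem' := by
        intro c f hf
        rcases (by decide : ∀ c : ZMod 2, c = 0 ∨ c = 1) c with rfl | rfl
        · rw [zero_smul]
          refine ⟨1, one_ne_zero, ⟨1, unitsETS_one_mem hTS, by simp⟩, ?_⟩
          intro τ
          simp [sgnF]
        · rw [one_smul]
          exact hf }
  have hcoann : D.dualCoannihilator = ⊥ := by
    rw [Submodule.eq_bot_iff]
    intro v hv
    rw [Submodule.mem_dualCoannihilator] at hv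
    have hfix : ∀ x ∈ Sbig, (Additive.toMul v) x = (1 : F ≃ₐ[K] F) x := by
      intro x hx
      obtain ⟨ε, hε, hx2⟩ := hx
      have hx0 : x ≠ 0 := hSbigNe x ⟨ε, hε, hx2⟩
      let fa : Additive (F ≃ₐ[K] F) →+ ZMod 2 :=
        { toFun := fun τ => if (Additive.toMul τ) x = x then 0 else 1
          map_zero' := by simp
          map_add' := by
            intro σ τ
            have hmul : Additive.toMul (σ + τ) = Additive.toMul σ * Additive.toMul τ := rfl
            rcases hpm (Additive.toMul σ) x _ hx2 with h1 | h1 <;>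
              rcases hpm (Additive.toMul τ) x _ hx2 with h2 | h2 <;>
              · rw [hmul]
                simp only [AlgEquiv.mul_apply, h1, h2, map_neg, neg_neg, if_pos rfl,
                  if_neg (hneg x hx0)]
                try decide }
      have hfa : (fa.toZModLinearMap 2) ∈ D := by
        refine ⟨x, hx0, ⟨ε, hε, hx2⟩, ?_⟩
        intro τ
        rcases hpm τ x _ hx2 with h1 | h1
        · have : fa (Additive.ofMul τ) = 0 := if_pos h1
          rw [AddMonoidHom.coe_toZModLinearMap, this, h1]
          simp [sgnF]
        · have hne : ¬ (τ x = x) := fun hc => hneg x hx0 (h1 ▸ hc)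
          have : fa (Additive.ofMul τ) = 1 := if_neg hne
          rw [AddMonoidHom.coe_toZModLinearMap, this, h1]
          simp [sgnF, (by decide : (1:ZMod 2) ≠ 0)]
      have h0 : (if (Additive.toMul v) x = x then (0:ZMod 2) else 1) = 0 := hv _ hfa
      by_cases hc : (Additive.toMul v) x = x
      · simpa using hc
      · rw [if_neg hc] at h0
        exact absurd h0 (by decide)
    have hv1 : Additive.toMul v = 1 := hglue _ _ hfix
    simpa using congrArg Additive.ofMul hv1
  have hDtop : D = ⊤ := by
    apply Submodule.eq_top_of_finrank_eq
    have h1 := Subspace.finrank_add_finrank_dualCoannihilator_eq D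
    rw [hcoann, finrank_bot] at h1
    rw [Subspace.dual_finrank_eq]
    omega
  -- existence of conjugations
  have hexistsτ : ∀ (u : InfinitePlace K) (hu : IsReal u), u ∉ Sinf →
      ∃ τ : F ≃ₐ[K] F, τ ∈ Tset ∧ ∃ φ : F →+* ℂ,
        (∀ x : K, φ (algebraMap K F x) = (embedding_of_isReal hu x : ℂ)) ∧
        ∀ y : F, φ (τ y) = starRingEnd ℂ (φ y) := by
    intro u hu hune
    letI : Algebra K ℝ := (embedding_of_isReal hu).toAlgebra
    letI : Algebra K ℂ := (Complex.ofRealHom.comp (embedding_of_isReal hu)).toAlgebra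
    haveI : IsScalarTower K ℝ ℂ := IsScalarTower.of_algebraMap_eq (fun x => rfl)
    haveI : Algebra.IsAlgebraic K F := Algebra.IsAlgebraic.of_finite K F
    let ψ : F →ₐ[K] ℂ := IsAlgClosed.lift
    letI : Algebra F ℂ := ψ.toRingHom.toAlgebra
    haveI : IsScalarTower K F ℂ := IsScalarTower.of_algebraMap_eq (fun x => (ψ.commutes x).symm)
    let c : ℂ ≃ₐ[K] ℂ := Complex.conjAe.restrictScalars K
    let τ : F ≃ₐ[K] F := (c.toAlgHom.restrictNormal' F)
    have hψτ : ∀ y : F, ψ (τ y) = starRingEnd ℂ (ψ y) := by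
      intro y
      have h1 : algebraMap F ℂ (c.toAlgHom.restrictNormal F y) = c.toAlgHom (algebraMap F ℂ y) :=
        AlgHom.restrictNormal_commutes c.toAlgHom F y
      have h2 : τ y = c.toAlgHom.restrictNormal F y := rfl
      rw [h2]
      exact h1
    refine ⟨τ, ⟨u, hu, hune, ψ.toRingHom, fun x => ?_, hψτ⟩, ψ.toRingHom, fun x => ?_, hψτ⟩ <;>
    · show ψ (algebraMap K F x) = _
      rw [ψ.commutes x]
      rfl
  -- easy direction: Tset fixes L
  have heasy : Subgroup.closure Tset ≤ L.fixingSubgroup := by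
    rw [Subgroup.closure_le]
    intro τ hτ
    rw [SetLike.mem_coe, IntermediateField.mem_fixingSubgroup_iff]
    intro y hy
    have hgens : ∀ x ∈ {x : F | ∃ ε : Kˣ, ε ∈ unitsETS K T S₀ Sinf ∧
        x ^ 2 = algebraMap K F (ε : K)}, τ x = (1 : F ≃ₐ[K] F) x := by
      rintro x ⟨ε, hεS, hx2⟩
      obtain ⟨u, hu, hune, φ, hφK, hφc⟩ := hτ
      have hpos : 0 < embedding_of_isReal hu (ε : K) := hεS.2.1 u hu hune
      have hz2 : (φ x) ^ 2 = ((embedding_of_isReal hu (ε : K) : ℝ) : ℂ) := by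
        rw [← map_pow, hx2, hφK]
      have him : (φ x).im = 0 := by
        have h1 := congrArg Complex.im hz2
        have h2 := congrArg Complex.re hz2
        rw [pow_two] at h1 h2
        simp only [Complex.mul_im, Complex.mul_re, Complex.ofReal_im, Complex.ofReal_re] at h1 h2
        have hab : (φ x).re * (φ x).im = 0 := by linarith
        rcases mul_eq_zero.mp hab with ha | hb
        · nlinarith [hpos]
        · exact hb
      have hfix : φ (τ x) = φ x := by
        rw [hφc, Complex.conj_eq_iff_im.mpr him]
      rw [AlgEquiv.one_apply]
      exact φ.injective hfix
    have := auxFixesAdjoin (fun x hx => by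
      obtain ⟨ε, _, hx2⟩ := hx; exact auxIsIntegral hx2) τ 1 hgens y hy
    rw [this, AlgEquiv.one_apply]
  -- hard direction
  have hhard : L.fixingSubgroup ≤ Subgroup.closure Tset := by
    intro σ hσ
    by_contra hσH
    let H' : Submodule (ZMod 2) (Additive (F ≃ₐ[K] F)) :=
      AddSubgroup.toZModSubmodule 2 ((Subgroup.closure Tset).toAddSubgroup)
    have hIff : ∀ g : F ≃ₐ[K] F,
        (Additive.ofMul g ∈ H') ↔ g ∈ Subgroup.closure Tset := fun g => Iff.rfl
    have hσH' : Additive.ofMul σ ∉ H' := fun hmem => hσH ((hIff σ).mp hmem)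
    obtain ⟨f, hfσ, hfH⟩ := Submodule.exists_dual_map_eq_bot_of_notMem hσH' inferInstance
    have hfD : f ∈ D := by rw [hDtop]; trivial
    obtain ⟨x, hx0, ⟨ε, hεbig, hx2⟩, hchar⟩ := hfD
    have hfT : ∀ τ ∈ Tset, f (Additive.ofMul τ) = 0 := by
      intro τ hτ
      have hmem : Additive.ofMul τ ∈ H' := (hIff τ).mpr (Subgroup.subset_closure hτ)
      have hmap : f (Additive.ofMul τ) ∈ H'.map f := Submodule.mem_map_of_mem hmem
      rw [hfH] at hmap
      exact (Submodule.mem_bot (ZMod 2)).mp hmap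
    have hεS : ε ∈ unitsETS K T S₀ Sinf := by
      refine ⟨hεbig.1, ?_, hεbig.2.2⟩
      intro w hw hwn
      obtain ⟨τ, hτT, φ, hφK, hφc⟩ := hexistsτ w hw hwn
      have hτx : τ x = x := by
        have h := hchar τ
        rw [hfT τ hτT] at h
        simpa [sgnF] using h
      have him : (φ x).im = 0 := by
        apply Complex.conj_eq_iff_im.mp
        exact (hφc x).symm.trans (by rw [hτx])
      have hre : φ x = ((φ x).re : ℂ) := Complex.ext rfl (by simp [him])
      have hz2' : (φ x) ^ 2 = ((embedding_of_isReal hw (ε : K) : ℝ) : ℂ) := by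
        rw [← map_pow, hx2, hφK]
      have hz2 : ((embedding_of_isReal hw (ε : K) : ℝ) : ℂ) = (((φ x).re ^ 2 : ℝ) : ℂ) := by
        rw [Complex.ofReal_pow, ← hz2']
        exact congrArg (· ^ 2) hre
      have hφx0 : φ x ≠ 0 := fun h0 => hx0 (φ.injective (by rw [h0, map_zero]))
      have hre0 : (φ x).re ≠ 0 := fun h0 => hφx0 (by rw [hre, h0, Complex.ofReal_zero])
      rw [Complex.ofReal_inj.mp hz2]
      positivity
    have hxL : x ∈ L := IntermediateField.subset_adjoin K _ ⟨ε, hεS, hx2⟩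
    have hσx : σ x = x := (IntermediateField.mem_fixingSubgroup_iff L σ).mp hσ x hxL
    have hfσ1 : f (Additive.ofMul σ) = 1 := (by decide : ∀ a : ZMod 2, a ≠ 0 → a = 1) _ hfσ
    have h := hchar σ
    rw [hfσ1, hσx] at h
    have hxx : -x = x := by
      have : sgnF F 1 = (-1 : F) := by simp [sgnF, (by decide : (1:ZMod 2) ≠ 0)]
      rw [this] at h
      linear_combination -h
    exact hneg x hx0 hxx
  rw [le_antisymm heasy hhard]
  exact IsGalois.fixedField_fixingSubgroup L
end

section
/- Let K be a number field, p a prime, and S_0 a finite set of finite places of K. Let V_S = {x ∈ K^× : v(x) ≡ 0 (mod p) for every finite place v ∉ S_0} and let E^{S̄} = {x ∈ K^× : v(x) = 0 for every finite place v ∉ S_0} be the S_0-unit group. Then there is an exact sequence of abelian groups 1 → E^{S̄}(K^×)^p/(K^×)^p → V_S/(K^×)^p → Cl^S_K[p] → 1, where Cl^S_K is the class group of the ring of S_0-integers of K, Cl^S_K[p] its p-torsion subgroup, and the right-hand map sends the class of x to the class of the unique fractional ideal I supported away from S_0 whose p-th power is the prime-to-S_0 part of the principal ideal (x). -/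
open IsDedekindDomain NumberField
open scoped Multiplicative nonZeroDivisors WithZero

/-- The subgroup of elements of order dividing `p` (the `p`-torsion subgroup) of a commutative
group `G`. -/
def pTorsion (G : Type*) [CommGroup G] (p : ℕ) : Subgroup G where
  carrier := {c | c ^ p = 1}
  one_mem' := one_pow p
  mul_mem' := fun {a b} ha hb => by
    simp only [Set.mem_setOf_eq] at *
    rw [mul_pow, ha, hb, one_mul]
  inv_mem' := fun {a} ha => by
    simp only [Set.mem_setOf_eq] at *
    rw [inv_pow, ha, inv_one]

open IsDedekindDomain.HeightOneSpectrum
open scoped Classical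

section Aux
variable {A : Type*} [CommRing A] [IsDedekindDomain A] {K : Type*} [Field K]
  [Algebra A K] [IsFractionRing A K]

theorem aux_intValuation_eq {v : HeightOneSpectrum A} {r : A} (hr : r ≠ 0) :
    v.intValuation r = (((Multiplicative.ofAdd
      (-(Associates.mk v.asIdeal).count (Associates.mk (Ideal.span {r} : Ideal A)).factors : ℤ))
        : Multiplicative ℤ) : ℤᵐ⁰) :=
  v.intValuationDef_if_neg hr

theorem aux_val_count (v : HeightOneSpectrum A) (x : K) (hx : x ≠ 0) :
    v.valuation K x = ((Multiplicative.ofAdd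
      (-(FractionalIdeal.count K v (FractionalIdeal.spanSingleton A⁰ x))) : Multiplicative ℤ)
        : ℤᵐ⁰) := by
  obtain ⟨⟨n, d⟩, (hnd : IsLocalization.mk' K n d = x)⟩ := IsLocalization.mk'_surjective A⁰ x
  have hd0 : (d : A) ≠ 0 := nonZeroDivisors.coe_ne_zero d
  have hn0 : n ≠ 0 := by
    rintro rfl
    rw [IsLocalization.mk'_zero] at hnd
    exact hx hnd.symm
  have hxspan : FractionalIdeal.spanSingleton A⁰ x ≠ 0 := by
    rw [ne_eq, FractionalIdeal.spanSingleton_eq_zero_iff]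
    exact hx
  have hI : FractionalIdeal.spanSingleton A⁰ x =
      FractionalIdeal.spanSingleton A⁰ ((algebraMap A K) (d : A))⁻¹ *
        ↑(Ideal.span {n} : Ideal A) := by
    rw [FractionalIdeal.coeIdeal_span_singleton,
      FractionalIdeal.spanSingleton_mul_spanSingleton, ← hnd, IsFractionRing.mk'_eq_div,
      div_eq_mul_inv, mul_comm]
  rw [FractionalIdeal.count_well_defined K v hxspan hI, ← hnd, valuation_of_mk',
    aux_intValuation_eq hn0, aux_intValuation_eq hd0]
  rw [← WithZero.coe_div, WithZero.coe_inj, ← ofAdd_sub]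
  congr 1
  ring

end Aux

section Aux2
variable {A : Type*} [CommRing A] [IsDedekindDomain A] {K : Type*} [Field K]
  [Algebra A K] [IsFractionRing A K]

theorem aux_count_support (I : FractionalIdeal A⁰ K) :
    (Function.mulSupport fun v : HeightOneSpectrum A =>
      (v.asIdeal : FractionalIdeal A⁰ K) ^ (FractionalIdeal.count K v I)).Finite := by
  apply Set.Finite.subset (Filter.eventually_cofinite.mp (FractionalIdeal.finite_factors I))
  intro v hv
  simp only [Function.mem_mulSupport] at hv
  intro h0
  exact hv (by rw [h0, zpow_zero])

theorem aux_le_one {I : FractionalIdeal A⁰ K} (hI : I ≠ 0)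
    (h : ∀ v, 0 ≤ FractionalIdeal.count K v I) : I ≤ 1 := by
  rw [← FractionalIdeal.finprod_heightOneSpectrum_factorization' K hI]
  rw [finprod_eq_prod_of_mulSupport_subset _ (aux_count_support I).coe_toFinset.superset]
  refine Finset.prod_induction _ (· ≤ 1) (fun a b ha hb => ?_) le_rfl (fun v _ => ?_)
  · calc a * b ≤ a * 1 := mul_le_mul_right hb a
    _ = a := mul_one a
    _ ≤ 1 := ha
  · have : (v.asIdeal : FractionalIdeal A⁰ K) ^ (FractionalIdeal.count K v I) =
        ((v.asIdeal ^ (FractionalIdeal.count K v I).toNat : Ideal A) : FractionalIdeal A⁰ K) := by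
      rw [FractionalIdeal.coeIdeal_pow, ← zpow_natCast, Int.toNat_of_nonneg (h v)]
    rw [this]
    exact FractionalIdeal.coeIdeal_le_one

theorem aux_integral {x : K} (h : ∀ v : HeightOneSpectrum A, v.valuation K x ≤ 1) :
    ∃ a : A, algebraMap A K a = x := by
  by_cases hx : x = 0
  · exact ⟨0, by rw [map_zero, hx]⟩
  have hxspan : FractionalIdeal.spanSingleton A⁰ x ≠ 0 := by
    rw [ne_eq, FractionalIdeal.spanSingleton_eq_zero_iff]; exact hx
  have hle : FractionalIdeal.spanSingleton A⁰ x ≤ 1 := by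
    apply aux_le_one hxspan
    intro v
    have := h v
    rw [aux_val_count v x hx, ← WithZero.coe_one, WithZero.coe_le_coe, ← ofAdd_zero,
      Multiplicative.ofAdd_le, neg_le, neg_zero] at this
    exact this
  have hmem : x ∈ (1 : FractionalIdeal A⁰ K) := hle (FractionalIdeal.mem_spanSingleton_self A⁰ x)
  rwa [FractionalIdeal.mem_one_iff] at hmem

theorem aux_count_inj {I J : (FractionalIdeal A⁰ K)ˣ}
    (h : ∀ v, FractionalIdeal.count K v (I : FractionalIdeal A⁰ K) =
      FractionalIdeal.count K v (J : FractionalIdeal A⁰ K)) : I = J := by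
  ext : 1
  rw [← FractionalIdeal.finprod_heightOneSpectrum_factorization' K I.ne_zero,
    ← FractionalIdeal.finprod_heightOneSpectrum_factorization' K J.ne_zero]
  exact finprod_congr fun v => by rw [h v]

theorem aux_pow_inj {p : ℕ} (hp : p ≠ 0) :
    Function.Injective (fun I : (FractionalIdeal A⁰ K)ˣ => I ^ p) := by
  intro I J h
  replace h : I ^ p = J ^ p := h
  apply aux_count_inj
  intro v
  have hc : FractionalIdeal.count K v ((I : FractionalIdeal A⁰ K) ^ p) =
      FractionalIdeal.count K v ((J : FractionalIdeal A⁰ K) ^ p) := by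
    rw [← Units.val_pow_eq_pow_val, ← Units.val_pow_eq_pow_val, h]
  rw [FractionalIdeal.count_pow, FractionalIdeal.count_pow] at hc
  exact mul_left_cancel₀ (by exact_mod_cast hp) hc

theorem aux_root {p : ℕ} (hp : p ≠ 0) {x : K} (hx : x ≠ 0)
    (h : ∀ v, (p : ℤ) ∣ FractionalIdeal.count K v (FractionalIdeal.spanSingleton A⁰ x)) :
    ∃ I : (FractionalIdeal A⁰ K)ˣ,
      (I : FractionalIdeal A⁰ K) ^ p = FractionalIdeal.spanSingleton A⁰ x := by
  have hxspan : FractionalIdeal.spanSingleton A⁰ x ≠ 0 := by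
    rw [ne_eq, FractionalIdeal.spanSingleton_eq_zero_iff]; exact hx
  set c : HeightOneSpectrum A → ℤ := fun v =>
    FractionalIdeal.count K v (FractionalIdeal.spanSingleton A⁰ x) / p with hc
  have hsupp : (Function.mulSupport fun v : HeightOneSpectrum A =>
      (v.asIdeal : FractionalIdeal A⁰ K) ^ (c v)).Finite := by
    apply Set.Finite.subset (Filter.eventually_cofinite.mp
      (FractionalIdeal.finite_factors (FractionalIdeal.spanSingleton A⁰ x)))
    intro v hv
    simp only [Function.mem_mulSupport] at hv
    intro h0
    apply hv
    have : c v = 0 := by rw [hc]; simp only [h0, Int.zero_ediv]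
    rw [this, zpow_zero]
  set I₀ : FractionalIdeal A⁰ K := ∏ᶠ v, (v.asIdeal : FractionalIdeal A⁰ K) ^ (c v) with hI₀
  have hIp : I₀ ^ p = FractionalIdeal.spanSingleton A⁰ x := by
    rw [hI₀, finprod_pow hsupp]
    rw [← FractionalIdeal.finprod_heightOneSpectrum_factorization' K hxspan]
    apply finprod_congr
    intro v
    rw [← zpow_natCast ((v.asIdeal : FractionalIdeal A⁰ K) ^ (c v)), ← zpow_mul]
    congr 1
    rw [hc]
    exact Int.ediv_mul_cancel (h v)
  have hI0 : I₀ ≠ 0 := by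
    intro h0
    rw [h0, zero_pow hp] at hIp
    exact hxspan hIp.symm
  exact ⟨Units.mk0 I₀ hI0, hIp⟩

end Aux2

section NF
variable {K : Type*} [Field K] [NumberField K] (S₀ : Set (HeightOneSpectrum (𝓞 K)))

/-- The multiplicative set of elements supported in `S₀`. -/
def Msub : Submonoid (𝓞 K) where
  carrier := {r | r ≠ 0 ∧ ∀ v : HeightOneSpectrum (𝓞 K), v ∉ S₀ → v.intValuation r = 1}
  one_mem' := ⟨one_ne_zero, fun v _ => map_one _⟩
  mul_mem' := fun {a b} ha hb => ⟨mul_ne_zero ha.1 hb.1, fun v hv => by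
    rw [map_mul, ha.2 v hv, hb.2 v hv, one_mul]⟩

theorem Msub_le : Msub S₀ ≤ (𝓞 K)⁰ := fun r hr => mem_nonZeroDivisors_of_ne_zero hr.1

theorem HOS_eq {A : Type*} [CommRing A] [IsDedekindDomain A]
    {v w : HeightOneSpectrum A} (h : v.asIdeal = w.asIdeal) : v = w := by
  cases v; cases w; simpa using h

theorem exists_m (q : HeightOneSpectrum (𝓞 K)) :
    ∃ (m : 𝓞 K) (n : ℕ), 0 < n ∧ Ideal.span {m} = q.asIdeal ^ n := by
  have hq0 : q.asIdeal ≠ 0 := q.ne_bot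
  have hq : q.asIdeal ∈ (Ideal (𝓞 K))⁰ := mem_nonZeroDivisors_of_ne_zero hq0
  set n := orderOf (ClassGroup.mk0 (⟨q.asIdeal, hq⟩ : (Ideal (𝓞 K))⁰))
  have hn : 0 < n := orderOf_pos _
  have h1 : ClassGroup.mk0 ((⟨q.asIdeal, hq⟩ : (Ideal (𝓞 K))⁰) ^ n) = 1 := by
    rw [map_pow]; exact pow_orderOf_eq_one _
  have hqn : ((⟨q.asIdeal, hq⟩ : (Ideal (𝓞 K))⁰) ^ n : (Ideal (𝓞 K))⁰) =
      ⟨q.asIdeal ^ n, pow_mem hq n⟩ := by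
    ext; simp
  rw [hqn, ClassGroup.mk0_eq_one_iff] at h1
  obtain ⟨m, hm⟩ := h1.principal
  exact ⟨m, n, hn, hm.symm⟩

theorem m_ne_zero {q : HeightOneSpectrum (𝓞 K)} {m : 𝓞 K} {n : ℕ} (hn : 0 < n)
    (hm : Ideal.span {m} = q.asIdeal ^ n) : m ≠ 0 := by
  intro h0
  apply pow_ne_zero n (q.ne_bot : q.asIdeal ≠ 0)
  rw [← hm, h0, Ideal.span_singleton_eq_bot.mpr rfl]
  rfl

theorem m_val_eq_one {q v : HeightOneSpectrum (𝓞 K)} (hvq : v ≠ q) {m : 𝓞 K} {n : ℕ}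
    (hn : 0 < n) (hm : Ideal.span {m} = q.asIdeal ^ n) : v.intValuation m = 1 := by
  have hle := v.intValuation_le_one m
  rcases lt_or_eq_of_le hle with hlt | heq
  · exfalso
    rw [intValuation_lt_one_iff_dvd, hm] at hlt
    have hv : v.asIdeal ∣ q.asIdeal := v.prime.dvd_of_dvd_pow hlt
    rw [Ideal.dvd_iff_le] at hv
    exact hvq (HOS_eq ((q.isMaximal.eq_of_le v.isPrime.ne_top hv)).symm)
  · exact heq

theorem m_val_le {q : HeightOneSpectrum (𝓞 K)} {m : 𝓞 K} {n : ℕ} (hn : 0 < n)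
    (hm : Ideal.span {m} = q.asIdeal ^ n) :
    q.intValuation m ≤ ((Multiplicative.ofAdd (-(n : ℤ)) : Multiplicative ℤ) : ℤᵐ⁰) := by
  have := (q.intValuation_le_pow_iff_dvd m n).mpr (by rw [hm])
  exact this

theorem m_mem_Msub {q : HeightOneSpectrum (𝓞 K)} (hq : q ∈ S₀) {m : 𝓞 K} {n : ℕ} (hn : 0 < n)
    (hm : Ideal.span {m} = q.asIdeal ^ n) : m ∈ Msub S₀ :=
  ⟨m_ne_zero hn hm, fun v hv => m_val_eq_one (fun h : v = q => hv (h ▸ hq)) hn hm⟩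


section Loc
variable [IsFractionRing (S₀.integer K) K]

theorem mem_integer_iff (x : K) :
    x ∈ S₀.integer K ↔ ∀ v : HeightOneSpectrum (𝓞 K), v ∉ S₀ → v.valuation K x ≤ 1 :=
  Iff.rfl

theorem isLocalization_integer (hS₀fin : S₀.Finite) :
    IsLocalization (Msub S₀) (S₀.integer K) where
  map_units := by
    rintro ⟨m, hm0, hm⟩
    have hmK : algebraMap (𝓞 K) K m ≠ 0 :=
      fun h => hm0 ((map_eq_zero_iff _ (IsFractionRing.injective (𝓞 K) K)).mp h)
    rw [isUnit_iff_exists_inv]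
    refine ⟨⟨(algebraMap (𝓞 K) K m)⁻¹, ?_⟩, ?_⟩
    · intro v hv
      rw [map_inv₀, valuation_of_algebraMap, hm v hv, inv_one]
    · exact Subtype.ext (mul_inv_cancel₀ hmK)
  surj := by
    intro z
    by_cases hz : z = 0
    · exact ⟨⟨0, 1⟩, by simp [hz]⟩
    have hzK : (z : K) ≠ 0 := fun h => hz (Subtype.ext h)
    -- data for each prime in S₀
    set mf : HeightOneSpectrum (𝓞 K) → 𝓞 K := fun q => (exists_m q).choose with hmf
    set nf : HeightOneSpectrum (𝓞 K) → ℕ := fun q => (exists_m q).choose_spec.choose with hnf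
    have hspec : ∀ q, 0 < nf q ∧ Ideal.span {mf q} = q.asIdeal ^ (nf q) :=
      fun q => (exists_m q).choose_spec.choose_spec
    set kf : HeightOneSpectrum (𝓞 K) → ℕ := fun q =>
      (Multiplicative.toAdd (WithZero.unzero (((q.valuation K).ne_zero_iff).mpr hzK))).toNat with hkf
    set T := hS₀fin.toFinset with hT
    set m : 𝓞 K := ∏ q ∈ T, (mf q) ^ (kf q) with hmdef
    have hmM : m ∈ Msub S₀ := by
      apply prod_mem
      intro q hq
      exact pow_mem (m_mem_Msub S₀ (hS₀fin.mem_toFinset.mp hq) (hspec q).1 (hspec q).2) _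
    have hint : ∀ v : HeightOneSpectrum (𝓞 K),
        v.valuation K ((z : K) * algebraMap (𝓞 K) K m) ≤ 1 := by
      intro v
      rw [map_mul, valuation_of_algebraMap]
      by_cases hv : v ∈ S₀
      · have hval : v.intValuation m ≤ ((Multiplicative.ofAdd (-(kf v : ℤ)) : Multiplicative ℤ)
            : ℤᵐ⁰) := by
          rw [hmdef, map_prod]
          rw [Finset.prod_eq_single_of_mem v (hS₀fin.mem_toFinset.mpr hv) ?side]
          · rw [map_pow]
            calc (v.intValuation (mf v)) ^ (kf v)
                ≤ ((Multiplicative.ofAdd (-(nf v : ℤ)) : Multiplicative ℤ) : ℤᵐ⁰) ^ (kf v) :=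
                  pow_le_pow_left' (m_val_le (hspec v).1 (hspec v).2) _
              _ ≤ _ := by
                  rw [← WithZero.coe_pow, WithZero.coe_le_coe, ← ofAdd_nsmul]
                  rw [Multiplicative.ofAdd_le]
                  simp only [smul_neg, nsmul_eq_mul]
                  rw [neg_le_neg_iff]
                  exact_mod_cast le_mul_of_one_le_right (Nat.zero_le _) (hspec v).1
          case side =>
            intro q hqT hqv
            rw [map_pow, m_val_eq_one (Ne.symm hqv) (hspec q).1 (hspec q).2, one_pow]
        calc v.valuation K (z : K) * v.intValuation m
            ≤ v.valuation K (z : K) * ((Multiplicative.ofAdd (-(kf v : ℤ)) : Multiplicative ℤ)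
              : ℤᵐ⁰) := mul_le_mul_right hval _
          _ ≤ 1 := by
              rw [← WithZero.coe_unzero (((v.valuation K).ne_zero_iff).mpr hzK), ← WithZero.coe_mul,
                ← WithZero.coe_one, WithZero.coe_le_coe]
              rw [← Multiplicative.toAdd_le, toAdd_mul, toAdd_one, toAdd_ofAdd]
              have : (Multiplicative.toAdd (WithZero.unzero (((v.valuation K).ne_zero_iff).mpr hzK)))
                  ≤ (kf v : ℤ) := by
                rw [hkf]
                exact Int.self_le_toNat _
              omega
      · have h1 : v.intValuation m = 1 := hmM.2 v hv
        rw [h1, mul_one]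
        exact Set.integer_valuation_le_one S₀ K z hv
    obtain ⟨r, hr⟩ := aux_integral hint
    refine ⟨⟨r, ⟨m, hmM⟩⟩, Subtype.ext ?_⟩
    show (z : K) * algebraMap (𝓞 K) K m = algebraMap (𝓞 K) K r
    exact hr.symm
  exists_of_eq := by
    intro a b h
    refine ⟨1, ?_⟩
    have h2 : (algebraMap (𝓞 K) K) a = (algebraMap (𝓞 K) K) b :=
      congrArg (fun t : (S₀.integer K) => (t : K)) h
    rw [IsFractionRing.injective (𝓞 K) K h2]

end Loc
end NF

set_option synthInstance.maxHeartbeats 1000000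
set_option maxHeartbeats 1000000
section Bridge
variable {K : Type*} [Field K] [NumberField K] (S₀ : Set (HeightOneSpectrum (𝓞 K)))
  [IsFractionRing (S₀.integer K) K] [IsLocalization (Msub S₀) (S₀.integer K)]
  [IsDedekindDomain (S₀.integer K)]

theorem disj_of_not_mem {v : HeightOneSpectrum (𝓞 K)} (hv : v ∉ S₀) :
    Disjoint ((Msub S₀ : Submonoid (𝓞 K)) : Set (𝓞 K)) (v.asIdeal : Set (𝓞 K)) := by
  rw [Set.disjoint_left]
  rintro m ⟨hm0, hm⟩ hmv
  have h1 : v.intValuation m < 1 :=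
    (v.intValuation_lt_one_iff_dvd m).mpr (Ideal.dvd_span_singleton.mpr hmv)
  rw [hm v hv] at h1
  exact lt_irrefl 1 h1

theorem algMap_injective : Function.Injective (algebraMap (𝓞 K) (S₀.integer K)) := by
  intro a b h
  have h2 : (algebraMap (𝓞 K) K) a = (algebraMap (𝓞 K) K) b :=
    congrArg (fun t : (S₀.integer K) => (t : K)) h
  exact IsFractionRing.injective (𝓞 K) K h2

/-- The prime of the `S₀`-integers corresponding to a prime `v ∉ S₀`. -/
noncomputable def wOf {v : HeightOneSpectrum (𝓞 K)} (hv : v ∉ S₀) :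
    HeightOneSpectrum (S₀.integer K) where
  asIdeal := Ideal.map (algebraMap (𝓞 K) (S₀.integer K)) v.asIdeal
  isPrime := IsLocalization.isPrime_of_isPrime_disjoint (Msub S₀) _ v.asIdeal v.isPrime
    (disj_of_not_mem S₀ hv)
  ne_bot := by
    obtain ⟨a, ha, ha0⟩ := Submodule.exists_mem_ne_zero_of_ne_bot v.ne_bot
    intro hbot
    have h0 : algebraMap (𝓞 K) (S₀.integer K) a = 0 := by
      rw [← Ideal.mem_bot, ← hbot]
      exact Ideal.mem_map_of_mem _ ha
    exact ha0 (algMap_injective S₀ (by rw [h0, map_zero]))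

theorem wOf_asIdeal {v : HeightOneSpectrum (𝓞 K)} (hv : v ∉ S₀) :
    (wOf S₀ hv).asIdeal = Ideal.map (algebraMap (𝓞 K) (S₀.integer K)) v.asIdeal := rfl

theorem dvd_transfer {v : HeightOneSpectrum (𝓞 K)} (hv : v ∉ S₀) (n : ℕ) (a : 𝓞 K) :
    v.asIdeal ^ n ∣ Ideal.span {a} ↔
      (wOf S₀ hv).asIdeal ^ n ∣ Ideal.span {algebraMap (𝓞 K) (S₀.integer K) a} := by
  rw [Ideal.dvd_span_singleton, Ideal.dvd_span_singleton, wOf_asIdeal, ← Ideal.map_pow]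
  constructor
  · exact fun h => Ideal.mem_map_of_mem _ h
  · intro h
    rw [IsLocalization.mem_map_algebraMap_iff (Msub S₀)] at h
    obtain ⟨⟨b, m⟩, hb⟩ := h
    rw [← map_mul] at hb
    have hab : a * (m : 𝓞 K) = b := algMap_injective S₀ hb
    haveI := v.isPrime
    have hmem := Ideal.IsPrime.mul_mem_pow v.asIdeal (a := (m : 𝓞 K)) (b := a) (n := n)
      (by rw [mul_comm, hab]; exact b.property)
    rcases hmem with hmem | hmem
    · exact absurd hmem (Set.disjoint_left.mp (disj_of_not_mem S₀ hv) m.property)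
    · exact hmem

theorem aux_le_pow_iff {A : Type*} [CommRing A] [IsDedekindDomain A]
    {v : HeightOneSpectrum A} (r : A) (n : ℕ) :
    v.intValuation r ≤ (((Multiplicative.ofAdd (-(n : ℤ))) : Multiplicative ℤ) : ℤᵐ⁰) ↔
      v.asIdeal ^ n ∣ Ideal.span {r} :=
  v.intValuation_le_pow_iff_dvd r n

theorem intVal_transfer {v : HeightOneSpectrum (𝓞 K)} (hv : v ∉ S₀) {a : 𝓞 K} (ha : a ≠ 0) :
    v.intValuation a = (wOf S₀ hv).intValuation (algebraMap (𝓞 K) (S₀.integer K) a) := by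
  have ha' : algebraMap (𝓞 K) (S₀.integer K) a ≠ 0 := by
    intro h
    exact ha (algMap_injective S₀ (by rw [h, map_zero]))
  have h1 : ∀ n : ℕ, v.intValuation a ≤
        (((Multiplicative.ofAdd (-(n : ℤ))) : Multiplicative ℤ) : ℤᵐ⁰) ↔
      (wOf S₀ hv).intValuation (algebraMap (𝓞 K) (S₀.integer K) a) ≤
        (((Multiplicative.ofAdd (-(n : ℤ))) : Multiplicative ℤ) : ℤᵐ⁰) :=
    fun n => (aux_le_pow_iff a n).trans ((dvd_transfer S₀ hv n a).trans
      (aux_le_pow_iff _ n).symm)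
  rw [aux_intValuation_eq ha, aux_intValuation_eq ha'] at h1 ⊢
  have h2 : ∀ n : ℕ, ((Associates.mk v.asIdeal).count (Associates.mk (Ideal.span {a})).factors
        ≥ n) ↔ ((Associates.mk (wOf S₀ hv).asIdeal).count (Associates.mk
          (Ideal.span {algebraMap (𝓞 K) (S₀.integer K) a})).factors ≥ n) := by
    intro n
    have := h1 n
    rw [WithZero.coe_le_coe, WithZero.coe_le_coe, Multiplicative.ofAdd_le,
      Multiplicative.ofAdd_le, neg_le_neg_iff, neg_le_neg_iff, Nat.cast_le, Nat.cast_le] at this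
    exact this
  rw [le_antisymm ((h2 _).mp le_rfl) ((h2 _).mpr le_rfl)]

theorem val_transfer {v : HeightOneSpectrum (𝓞 K)} (hv : v ∉ S₀) (x : K) :
    v.valuation K x = (wOf S₀ hv).valuation K x := by
  by_cases hx : x = 0
  · rw [hx, map_zero, map_zero]
  obtain ⟨a, b, hb, hx'⟩ := IsFractionRing.div_surjective (A := 𝓞 K) x
  have hb0 : b ≠ 0 := nonZeroDivisors.ne_zero hb
  have ha0 : a ≠ 0 := by
    intro h
    rw [h, map_zero, zero_div] at hx'
    exact hx hx'.symm
  have hta : algebraMap (𝓞 K) K a =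
      algebraMap (S₀.integer K) K (algebraMap (𝓞 K) (S₀.integer K) a) := rfl
  have htb : algebraMap (𝓞 K) K b =
      algebraMap (S₀.integer K) K (algebraMap (𝓞 K) (S₀.integer K) b) := rfl
  rw [← hx', map_div₀, map_div₀, valuation_of_algebraMap, valuation_of_algebraMap, hta, htb,
    valuation_of_algebraMap, valuation_of_algebraMap, intVal_transfer S₀ hv ha0,
    intVal_transfer S₀ hv hb0]

theorem wOf_surjective (w : HeightOneSpectrum (S₀.integer K)) :
    ∃ (v : HeightOneSpectrum (𝓞 K)) (hv : v ∉ S₀), wOf S₀ hv = w := by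
  set q : Ideal (𝓞 K) := Ideal.comap (algebraMap (𝓞 K) (S₀.integer K)) w.asIdeal with hq
  have hmapq : Ideal.map (algebraMap (𝓞 K) (S₀.integer K)) q = w.asIdeal :=
    IsLocalization.map_comap (Msub S₀) _ w.asIdeal
  have hqprime : q.IsPrime := by
    haveI := w.isPrime
    exact Ideal.IsPrime.comap _
  have hqbot : q ≠ ⊥ := by
    intro h
    apply w.ne_bot
    rw [← hmapq, h, Ideal.map_bot]
  have hqS : (⟨q, hqprime, hqbot⟩ : HeightOneSpectrum (𝓞 K)) ∉ S₀ := by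
    intro hqS₀
    obtain ⟨m, n, hn, hm⟩ := exists_m (⟨q, hqprime, hqbot⟩ : HeightOneSpectrum (𝓞 K))
    have hmM : m ∈ Msub S₀ := m_mem_Msub S₀ hqS₀ hn hm
    have hmq : m ∈ q := by
      have h1 : Ideal.span {m} ≤ q := by
        rw [hm]
        exact Ideal.pow_le_self hn.ne'
      exact h1 (Ideal.mem_span_singleton_self m)
    have hunit : IsUnit (algebraMap (𝓞 K) (S₀.integer K) m) :=
      IsLocalization.map_units _ (⟨m, hmM⟩ : Msub S₀)
    exact w.isPrime.ne_top (Ideal.eq_top_of_isUnit_mem _ (Ideal.mem_comap.mp hmq) hunit)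
  refine ⟨⟨q, hqprime, hqbot⟩, hqS, ?_⟩
  apply HOS_eq
  rw [wOf_asIdeal]
  exact hmapq

end Bridge

set_option synthInstance.maxHeartbeats 1000000 in
set_option maxHeartbeats 1000000 in
/-- Let `K` be a number field, `p` a prime, and `S_0` a finite set of finite
places of `K`.  Let `V_S = {x ∈ K^× : v(x) ≡ 0 (mod p) for every finite place v ∉ S_0}` and
let `E^{S̄} = {x ∈ K^× : v(x) = 0 for every finite place v ∉ S_0}` be the `S_0`-unit group.
Then there is an exact sequence of abelian groups
`1 → E^{S̄}(K^×)^p/(K^×)^p → V_S/(K^×)^p → Cl^S_K[p] → 1`,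
where `Cl^S_K` is the class group of the ring of `S_0`-integers of `K`, `Cl^S_K[p]` its
`p`-torsion subgroup, and the right-hand map sends the class of `x` to the class of the unique
fractional ideal `I` supported away from `S_0` whose `p`-th power is the prime-to-`S_0` part of
the principal ideal `(x)` (equivalently, working over the ring of `S_0`-integers, the class of
the fractional ideal `I` with `I^p = (x)`). -/
theorem selmer_exact_sequence
    (K : Type*) [Field K] [NumberField K] (p : ℕ) (hp : p.Prime)
    (S₀ : Set (IsDedekindDomain.HeightOneSpectrum (𝓞 K))) (hS₀fin : S₀.Finite)
    [IsFractionRing (S₀.integer K) K]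
    (V P E' : Subgroup Kˣ)
    (hV : ∀ x : Kˣ, x ∈ V ↔ ∀ v : IsDedekindDomain.HeightOneSpectrum (𝓞 K), v ∉ S₀ →
      ∃ γ : ℤᵐ⁰, γ ^ p = v.valuation K (x : K))
    (hP : P = (powMonoidHom p : Kˣ →* Kˣ).range)
    (hE' : E' = S₀.unit K ⊔ P)
    (hle : E' ≤ V) :
    ∃ g : (V ⧸ P.subgroupOf V) →* ClassGroup (S₀.integer K),
      (∀ (x : Kˣ) (hx : x ∈ V)
          (I : (FractionalIdeal (S₀.integer K)⁰ K)ˣ),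
        (I : FractionalIdeal (S₀.integer K)⁰ K) ^ p
            = FractionalIdeal.spanSingleton (S₀.integer K)⁰ (x : K) →
        g (QuotientGroup.mk (⟨x, hx⟩ : V)) = ClassGroup.mk K I) ∧
      Function.Injective
        (QuotientGroup.map (P.subgroupOf E') (P.subgroupOf V)
          (Subgroup.inclusion hle) (fun y hy => hy)) ∧
      g.ker =
        (QuotientGroup.map (P.subgroupOf E') (P.subgroupOf V)
          (Subgroup.inclusion hle) (fun y hy => hy)).range ∧
      g.range = pTorsion (ClassGroup (S₀.integer K)) p := by
  classical
  have hp0 : p ≠ 0 := hp.ne_zero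
  haveI hLoc : IsLocalization (Msub S₀) (S₀.integer K) := isLocalization_integer S₀ hS₀fin
  haveI hDD : IsDedekindDomain (S₀.integer K) :=
    IsLocalization.isDedekindDomain (𝓞 K) (Msub_le S₀) (S₀.integer K)
  haveI : NoZeroSMulDivisors (S₀.integer K) K :=
    ⟨fun {c x} h => by
      rw [Algebra.smul_def, mul_eq_zero] at h
      exact h.imp_left (fun h' => (map_eq_zero_iff _ (IsFractionRing.injective (S₀.integer K) K)).mp h')⟩
  set sp : Kˣ → FractionalIdeal (S₀.integer K)⁰ K :=
    fun x => FractionalIdeal.spanSingleton (S₀.integer K)⁰ (x : K) with hsp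
  have hsp0 : ∀ x : Kˣ, sp x ≠ 0 := fun x => by
    rw [hsp, ne_eq, FractionalIdeal.spanSingleton_eq_zero_iff]
    exact x.ne_zero
  have hsp' : ∀ x : Kˣ, sp x = FractionalIdeal.spanSingleton (S₀.integer K)⁰ (x : K) :=
    fun _ => rfl
  have hspmul : ∀ x y : Kˣ, sp (x * y) = sp x * sp y := fun x y => by
    rw [hsp]
    simp only [Units.val_mul, FractionalIdeal.spanSingleton_mul_spanSingleton]
  -- membership in `V` is equivalent to all counts being divisible by `p`
  have hVcount : ∀ x : Kˣ, x ∈ V ↔ ∀ w : HeightOneSpectrum (S₀.integer K),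
      (p : ℤ) ∣ FractionalIdeal.count K w (sp x) := by
    intro x
    rw [hV x]
    constructor
    · intro h w
      obtain ⟨v, hv, rfl⟩ := wOf_surjective S₀ w
      obtain ⟨γ, hγ⟩ := h v hv
      rw [val_transfer S₀ hv, aux_val_count _ _ x.ne_zero] at hγ
      have hγ0 : γ ≠ 0 := by
        rintro rfl
        rw [zero_pow hp0] at hγ
        exact WithZero.zero_ne_coe hγ
      obtain ⟨δ, rfl⟩ := WithZero.ne_zero_iff_exists.mp hγ0
      rw [← WithZero.coe_pow, WithZero.coe_inj] at hγ
      have h1 := congrArg Multiplicative.toAdd hγ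
      rw [toAdd_pow, toAdd_ofAdd] at h1
      have h2 : (p : ℤ) * Multiplicative.toAdd δ = -FractionalIdeal.count K (wOf S₀ hv)
          (FractionalIdeal.spanSingleton (S₀.integer K)⁰ ((x : Kˣ) : K)) := by
        rw [← h1]
        push_cast [nsmul_eq_mul]
        ring
      refine ⟨-Multiplicative.toAdd δ, ?_⟩
      rw [hsp' x]
      linarith
    · intro h v hv
      obtain ⟨d, hd⟩ := h (wOf S₀ hv)
      refine ⟨((Multiplicative.ofAdd (-d) : Multiplicative ℤ) : ℤᵐ⁰), ?_⟩
      rw [val_transfer S₀ hv, aux_val_count _ _ x.ne_zero, ← WithZero.coe_pow, WithZero.coe_inj,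
        ← ofAdd_nsmul]
      congr 1
      rw [hd]
      push_cast
      ring
  -- existence and uniqueness of `p`-th roots of principal fractional ideals of elements of `V`
  have hroot : ∀ x : V, ∃ I : (FractionalIdeal (S₀.integer K)⁰ K)ˣ,
      (I : FractionalIdeal (S₀.integer K)⁰ K) ^ p = sp (x : Kˣ) :=
    fun x => aux_root hp0 (Units.ne_zero (x : Kˣ)) ((hVcount x).mp x.property)
  set Ich : V → (FractionalIdeal (S₀.integer K)⁰ K)ˣ := fun x => (hroot x).choose with hIch
  have hIchp : ∀ x : V, (Ich x : FractionalIdeal (S₀.integer K)⁰ K) ^ p = sp (x : Kˣ) :=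
    fun x => (hroot x).choose_spec
  have hIch_unique : ∀ (x : V) (J : (FractionalIdeal (S₀.integer K)⁰ K)ˣ),
      (J : FractionalIdeal (S₀.integer K)⁰ K) ^ p = sp (x : Kˣ) → Ich x = J := by
    intro x J hJ
    apply aux_pow_inj hp0
    replace hJ := (hIchp x).trans hJ.symm
    show Ich x ^ p = J ^ p
    apply Units.ext
    rw [Units.val_pow_eq_pow_val, Units.val_pow_eq_pow_val]
    exact hJ
  -- the homomorphism `f : V →* ClassGroup`
  set f : V →* ClassGroup (S₀.integer K) :=
    { toFun := fun x => ClassGroup.mk K (Ich x)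
      map_one' := by
        show ClassGroup.mk K (Ich 1) = 1
        have hone : (((1 : V) : Kˣ) : K) = 1 := by norm_num
        rw [hIch_unique 1 1 (by
          rw [Units.val_one, one_pow, hsp' ((1 : V) : Kˣ), hone,
            FractionalIdeal.spanSingleton_one]), map_one]
      map_mul' := by
        intro x y
        show ClassGroup.mk K (Ich (x * y)) = ClassGroup.mk K (Ich x) * ClassGroup.mk K (Ich y)
        rw [hIch_unique (x * y) (Ich x * Ich y) (by
          rw [Units.val_mul, mul_pow, hIchp x, hIchp y, ← hspmul]
          rfl), map_mul] } with hf
  have hf_apply : ∀ x : V, f x = ClassGroup.mk K (Ich x) := fun _ => rfl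
  -- `f` vanishes on p-th powers
  have hprincipal : ∀ (J : (FractionalIdeal (S₀.integer K)⁰ K)ˣ) (y : K),
      (J : FractionalIdeal (S₀.integer K)⁰ K) = FractionalIdeal.spanSingleton (S₀.integer K)⁰ y →
      ClassGroup.mk K J = 1 := by
    intro J y hJ
    rw [ClassGroup.mk_eq_one_iff]
    show (((J : FractionalIdeal (S₀.integer K)⁰ K)) : Submodule (S₀.integer K) K).IsPrincipal
    rw [hJ, FractionalIdeal.coe_spanSingleton]
    exact ⟨⟨y, rfl⟩⟩
  have hfP : ∀ (x : V), (x : Kˣ) ∈ P → f x = 1 := by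
    intro x hx
    rw [hP] at hx
    obtain ⟨y, hy⟩ := hx
    have hy' : (y : K) ^ p = ((x : Kˣ) : K) := by
      rw [← hy]; rfl
    rw [hf_apply, hIch_unique x (Units.mk0 (FractionalIdeal.spanSingleton (S₀.integer K)⁰ (y : K))
      (by rw [ne_eq, FractionalIdeal.spanSingleton_eq_zero_iff]; exact y.ne_zero)) (by
        rw [Units.val_mk0, FractionalIdeal.spanSingleton_pow, hy'])]
    exact hprincipal _ (y : K) (Units.val_mk0 _)
  -- `f` vanishes on S-units
  have hfU : ∀ (x : V), (x : Kˣ) ∈ S₀.unit K → f x = 1 := by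
    intro x hx
    have hmem : ((x : Kˣ) : K) ∈ S₀.integer K := by
      rw [mem_integer_iff S₀]
      intro v hv
      exact le_of_eq (Set.unit_valuation_eq_one S₀ K ⟨_, hx⟩ hv)
    have hmem' : (((x : Kˣ) : K))⁻¹ ∈ S₀.integer K := by
      rw [mem_integer_iff S₀]
      intro v hv
      rw [map_inv₀, Set.unit_valuation_eq_one S₀ K ⟨_, hx⟩ hv, inv_one]
    have hone : sp (x : Kˣ) = 1 := by
      apply le_antisymm
      · rw [hsp, FractionalIdeal.spanSingleton_le_iff_mem, FractionalIdeal.mem_one_iff]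
        exact ⟨⟨_, hmem⟩, rfl⟩
      · have h1 : (1 : FractionalIdeal (S₀.integer K)⁰ K) = sp (x : Kˣ) *
            FractionalIdeal.spanSingleton (S₀.integer K)⁰ (((x : Kˣ) : K))⁻¹ := by
          rw [hsp' (x : Kˣ), FractionalIdeal.spanSingleton_mul_spanSingleton,
            mul_inv_cancel₀ (Units.ne_zero (x : Kˣ)), FractionalIdeal.spanSingleton_one]
        rw [h1]
        calc sp (x:Kˣ) * FractionalIdeal.spanSingleton (S₀.integer K)⁰ (((x : Kˣ) : K))⁻¹
            ≤ sp (x:Kˣ) * 1 := by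
              apply mul_le_mul_right
              rw [FractionalIdeal.spanSingleton_le_iff_mem, FractionalIdeal.mem_one_iff]
              exact ⟨⟨_, hmem'⟩, rfl⟩
          _ = sp (x:Kˣ) := mul_one _
    rw [hf_apply, hIch_unique x 1 (by rw [Units.val_one, one_pow, hone]), map_one]
  -- `f` vanishes on `E'`
  have hfE : ∀ (x : V), (x : Kˣ) ∈ E' → f x = 1 := by
    intro x hx
    rw [hE'] at hx
    -- write x = u * w with u ∈ S₀.unit K, w ∈ P
    obtain ⟨u, hu, w, hw, huw⟩ := Subgroup.mem_sup.mp hx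
    have huV : u ∈ V := hle (hE' ▸ Subgroup.mem_sup_left hu)
    have hwV : w ∈ V := hle (hE' ▸ Subgroup.mem_sup_right hw)
    have : x = (⟨u, huV⟩ : V) * ⟨w, hwV⟩ := by
      apply Subtype.ext
      exact huw.symm
    rw [this, map_mul, hfU ⟨u, huV⟩ hu, hfP ⟨w, hwV⟩ hw, one_mul]
  have hker : P.subgroupOf V ≤ f.ker := by
    intro x hx
    exact hfP x hx
  set g : (V ⧸ P.subgroupOf V) →* ClassGroup (S₀.integer K) :=
    QuotientGroup.lift (P.subgroupOf V) f hker with hg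
  have hg_mk : ∀ x : V, g (QuotientGroup.mk x) = f x := fun x => rfl
  refine ⟨g, ?_, ?_, ?_, ?_⟩
  · -- value formula
    intro x hx I hI
    rw [hg_mk, hf_apply, hIch_unique ⟨x, hx⟩ I hI]
  · -- injectivity of the first map
    rw [← MonoidHom.ker_eq_bot_iff, eq_bot_iff]
    intro y hy
    induction y using QuotientGroup.induction_on with
    | H z =>
      erw [MonoidHom.mem_ker, QuotientGroup.map_mk, QuotientGroup.eq_one_iff] at hy
      rw [Subgroup.mem_bot, QuotientGroup.eq_one_iff]
      exact hy
  · -- kernel equals range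
    ext y
    induction y using QuotientGroup.induction_on with
    | H z =>
      constructor
      · intro hz
        rw [MonoidHom.mem_ker, hg_mk] at hz
        -- f z = 1 means Ich z is principal
        have hprin : ((Ich z : FractionalIdeal (S₀.integer K)⁰ K) :
            Submodule (S₀.integer K) K).IsPrincipal := ClassGroup.mk_eq_one_iff.mp hz
        haveI := hprin
        have hIeq : (Ich z : FractionalIdeal (S₀.integer K)⁰ K) =
            FractionalIdeal.spanSingleton (S₀.integer K)⁰
              (Submodule.IsPrincipal.generator ((Ich z : FractionalIdeal (S₀.integer K)⁰ K) :
                Submodule (S₀.integer K) K)) :=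
          FractionalIdeal.eq_spanSingleton_of_principal _
        set y : K := Submodule.IsPrincipal.generator ((Ich z : FractionalIdeal (S₀.integer K)⁰ K) :
            Submodule (S₀.integer K) K) with hydef
        have hy0 : y ≠ 0 := by
          intro h0
          apply hsp0 (z : Kˣ)
          rw [← hIchp z, hIeq, h0, FractionalIdeal.spanSingleton_zero, zero_pow hp0]
        have hyp : FractionalIdeal.spanSingleton (S₀.integer K)⁰ (y ^ p) = sp (z : Kˣ) := by
          rw [← FractionalIdeal.spanSingleton_pow, ← hIeq, hIchp z]
        rw [hsp] at hyp
        rw [FractionalIdeal.spanSingleton_eq_spanSingleton] at hyp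
        obtain ⟨u, hu⟩ := hyp
        have hu' : algebraMap (S₀.integer K) K (u : (S₀.integer K)) * y ^ p = ((z : Kˣ) : K) := by
          rw [← hu, Units.smul_def, Algebra.smul_def]
        -- the S-unit part
        set υ : S₀.unit K := (Set.unitEquivUnitsInteger S₀ K).symm u with hυ
        have hυval : ((υ : Kˣ) : K) = algebraMap (S₀.integer K) K (u : (S₀.integer K)) := rfl
        set yu : Kˣ := Units.mk0 y hy0 with hyu
        have hzfact : (z : Kˣ) = (υ : Kˣ) * yu ^ p := by
          apply Units.ext
          rw [Units.val_mul, Units.val_pow_eq_pow_val, hυval, hyu, Units.val_mk0, hu']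
        have hzE : (z : Kˣ) ∈ E' := by
          rw [hE', hzfact]
          exact mul_mem (Subgroup.mem_sup_left υ.property)
            (Subgroup.mem_sup_right (hP ▸ ⟨yu, rfl⟩))
        rw [MonoidHom.mem_range]
        refine ⟨QuotientGroup.mk (⟨(z : Kˣ), hzE⟩ : E'), ?_⟩
        erw [QuotientGroup.map_mk]
        rfl
      · rintro ⟨w, hw⟩
        induction w using QuotientGroup.induction_on with
        | H e =>
          erw [QuotientGroup.map_mk] at hw
          rw [MonoidHom.mem_ker, ← hw, hg_mk]
          exact hfE _ e.property
  · -- range equals p-torsion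
    ext C
    constructor
    · rintro ⟨y, rfl⟩
      induction y using QuotientGroup.induction_on with
      | H z =>
        show (g (QuotientGroup.mk z)) ^ p = 1
        rw [hg_mk, hf_apply, ← map_pow]
        apply hprincipal (Ich z ^ p) ((z : Kˣ) : K)
        rw [Units.val_pow_eq_pow_val, hIchp z]
    · intro hC
      have hC' : C ^ p = 1 := hC
      obtain ⟨I, rfl⟩ : ∃ I : (FractionalIdeal (S₀.integer K)⁰ K)ˣ, ClassGroup.mk K I = C := by
        refine ClassGroup.induction (K := K) (fun I => ⟨I, rfl⟩) C
      rw [← map_pow, ClassGroup.mk_eq_one_iff] at hC'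
      haveI := hC'
      have hIeq : ((I ^ p : (FractionalIdeal (S₀.integer K)⁰ K)ˣ) :
          FractionalIdeal (S₀.integer K)⁰ K) =
          FractionalIdeal.spanSingleton (S₀.integer K)⁰
            (Submodule.IsPrincipal.generator (((I ^ p : (FractionalIdeal (S₀.integer K)⁰ K)ˣ) :
              FractionalIdeal (S₀.integer K)⁰ K) : Submodule (S₀.integer K) K)) :=
        FractionalIdeal.eq_spanSingleton_of_principal _
      set y : K := Submodule.IsPrincipal.generator (((I ^ p : (FractionalIdeal (S₀.integer K)⁰ K)ˣ) :
          FractionalIdeal (S₀.integer K)⁰ K) : Submodule (S₀.integer K) K) with hydef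
      have hy0 : y ≠ 0 := by
        intro h0
        apply Units.ne_zero (I ^ p)
        rw [hIeq, h0, FractionalIdeal.spanSingleton_zero]
      set x : Kˣ := Units.mk0 y hy0 with hx
      have hxsp : sp x = (I : FractionalIdeal (S₀.integer K)⁰ K) ^ p := by
        rw [hsp' x, hx, Units.val_mk0, ← hIeq, Units.val_pow_eq_pow_val]
      have hxV : x ∈ V := by
        rw [hVcount]
        intro w
        rw [hxsp, FractionalIdeal.count_pow]
        exact ⟨_, rfl⟩
      refine ⟨QuotientGroup.mk (⟨x, hxV⟩ : V), ?_⟩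
      rw [hg_mk, hf_apply, hIch_unique ⟨x, hxV⟩ I hxsp.symm]
end
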